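/- arXiv:1107.3658 — 3 statements merged into one kernel-verified Lean document; each statement's English description precedes it below -/
import Mathlib

section
/- Let G be a graph, let T be a tree decomposition of G of width w, and let S ⊆ V(G). Then there exists a superset S' ⊇ S of size at most 2(w+1)·|S| such that for every connected component C of G − S' it holds that |N_G(C) ∩ S'| ≤ 2w. -/
set_option maxHeartbeats 1000000

variable {V : Type}

/-- The graph obtained from `G` by deleting the vertex set `S`
(deleted vertices are kept as isolated vertices). -/
def gdelete (G : SimpleGraph V) (S : Set V) : SimpleGraph V where
  Adj u v := G.Adj u v ∧ u ∉ S ∧ v ∉ S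
  symm := by constructor; intro u v h; exact ⟨h.1.symm, h.2.2, h.2.1⟩
  loopless := by constructor; intro v h; exact G.irrefl h.1

/-- The subgraph of `G` induced by the vertex set `A`
(vertices outside `A` are kept as isolated vertices). -/
def grestrict (G : SimpleGraph V) (A : Set V) : SimpleGraph V := gdelete G Aᶜ

/-- The open neighborhood `N_G(C)` of a vertex set `C`. -/
def gnbhd (G : SimpleGraph V) (C : Set V) : Set V := {v | v ∉ C ∧ ∃ u ∈ C, G.Adj u v}

/-- `C` is (the vertex set of) a connected component of the induced subgraph `G[A]`:
`C ⊆ A`, `C` is nonempty and connected, and `C` is closed under adjacency within `A`. -/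
def IsCompOf (G : SimpleGraph V) (A C : Set V) : Prop :=
  C ⊆ A ∧ C.Nonempty ∧ (∀ u ∈ C, ∀ v ∈ C, (grestrict G C).Reachable u v) ∧
    ∀ u ∈ C, ∀ v ∈ A, G.Adj u v → v ∈ C

/-- `(T, bag)` is a tree decomposition of `G`. -/
def IsTreeDecomp {ι : Type} (G : SimpleGraph V) (T : SimpleGraph ι) (bag : ι → Set V) :
    Prop :=
  T.IsTree ∧ (∀ v : V, ∃ i, v ∈ bag i) ∧
    (∀ u v : V, G.Adj u v → ∃ i, u ∈ bag i ∧ v ∈ bag i) ∧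
    ∀ v : V, (T.induce {i | v ∈ bag i}).Connected



namespace Stmt3Aux

open SimpleGraph Walk

variable {ι : Type} {T : SimpleGraph ι}

/-- The unique path between two nodes of a tree. -/
noncomputable def tp (hT : T.IsTree) (x y : ι) : T.Walk x y :=
  (hT.existsUnique_path x y).exists.choose

lemma tp_isPath (hT : T.IsTree) (x y : ι) : (tp hT x y).IsPath :=
  (hT.existsUnique_path x y).exists.choose_spec

lemma tp_unique (hT : T.IsTree) {x y : ι} (p : T.Walk x y) (hp : p.IsPath) :
    p = tp hT x y := by
  obtain ⟨q, hq, hu⟩ := hT.existsUnique_path x y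
  rw [hu p hp, hu _ (tp_isPath hT x y)]

/-- If some walk avoids `c`, then the tree path avoids `c`. -/
lemma avoid (hT : T.IsTree) {x y c : ι} (w : T.Walk x y) (hc : c ∉ w.support) :
    c ∉ (tp hT x y).support := by
  classical
  rw [← tp_unique hT w.bypass w.bypass_isPath]
  exact fun h => hc (w.support_bypass_subset h)

lemma notSep_symm (hT : T.IsTree) {x y c : ι} (h : c ∉ (tp hT x y).support) :
    c ∉ (tp hT y x).support := by
  classical
  rw [← tp_unique hT (tp hT x y).reverse (tp_isPath hT x y).reverse]
  simpa using h

lemma notSep_trans (hT : T.IsTree) {x y z c : ι} (h1 : c ∉ (tp hT x y).support)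
    (h2 : c ∉ (tp hT y z).support) : c ∉ (tp hT x z).support := by
  refine avoid hT ((tp hT x y).append (tp hT y z)) ?_
  rw [Walk.mem_support_append_iff]
  tauto

lemma tp_decomp (hT : T.IsTree) {c j : ι} (hne : c ≠ j) :
    ∃ (d : ι) (h : T.Adj c d), tp hT c j = Walk.cons h (tp hT d j) ∧
      c ∉ (tp hT d j).support ∧ (tp hT d j).length < (tp hT c j).length := by
  obtain ⟨d, h, q, hq⟩ := Walk.exists_eq_cons_of_ne hne (tp hT c j)
  have hp := tp_isPath hT c j
  rw [hq, Walk.cons_isPath_iff] at hp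
  have hqe : q = tp hT d j := tp_unique hT q hp.1
  refine ⟨d, h, by rw [hq, hqe], by rw [← hqe]; exact hp.2, ?_⟩
  rw [hq, ← hqe]
  simp [Walk.length_cons]

/-- In a tree, the entry edge from `c` toward a connected region is unique. -/
lemma entry_unique (hT : T.IsTree) {c d d' j j' : ι} (hd : T.Adj c d) (hd' : T.Adj c d')
    (h1 : c ∉ (tp hT d j).support) (h2 : c ∉ (tp hT d' j').support)
    (h3 : c ∉ (tp hT j j').support) : d = d' := by
  classical
  have hdd' : c ∉ (tp hT d d').support :=
    notSep_trans hT (notSep_trans hT h1 h3) (notSep_symm hT h2)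
  have hp1 : (Walk.cons hd (tp hT d d')).IsPath :=
    ((tp_isPath hT d d').cons hdd')
  have hp2 : (Walk.cons hd' (Walk.nil : T.Walk d' d')).IsPath := by
    rw [Walk.cons_isPath_iff]
    exact ⟨Walk.IsPath.nil, by simp [hd'.ne]⟩
  have := (tp_unique hT _ hp1).trans (tp_unique hT _ hp2).symm
  have hlen := congrArg Walk.length this
  simp [Walk.length_cons] at hlen
  exact Walk.Nil.eq hlen

/-- First vertex of a path lying in a set, with a clean split. -/
lemma firstmeet {x y : ι} (p : T.Walk x y) (Sset : Set ι) (hy : y ∈ Sset) :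
    ∃ m ∈ Sset, ∃ (p₁ : T.Walk x m) (p₂ : T.Walk m y),
      p = p₁.append p₂ ∧ (∀ z ∈ p₁.support, z ∈ Sset → z = m) := by
  classical
  induction p with
  | nil =>
    refine ⟨_, hy, Walk.nil, Walk.nil, rfl, ?_⟩
    intro z hz _
    simpa using hz
  | @cons a b y h q ih =>
    by_cases ha : a ∈ Sset
    · refine ⟨a, ha, Walk.nil, Walk.cons h q, rfl, ?_⟩
      intro z hz _
      simpa using hz
    · obtain ⟨m, hm, q₁, q₂, hq, hmin⟩ := ih hy
      refine ⟨m, hm, Walk.cons h q₁, q₂, by rw [hq, Walk.cons_append], ?_⟩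
      intro z hz hzS
      rw [Walk.support_cons] at hz
      rcases List.mem_cons.mp hz with rfl | hz
      · exact absurd hzS ha
      · exact hmin z hz hzS

/-- Median of three vertices in a tree. -/
lemma median (hT : T.IsTree) (x y z : ι) :
    ∃ m, m ∈ (tp hT x y).support ∧ m ∈ (tp hT x z).support ∧ m ∈ (tp hT y z).support := by
  classical
  obtain ⟨m, hm, p₁, p₂, hsplit, hmin⟩ :=
    firstmeet (tp hT y x) {i | i ∈ (tp hT x z).support} (by simp)
  have hq2 : m ∈ (tp hT x z).support := hm
  have hq2path : ((tp hT x z).dropUntil m hq2).IsPath := by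
    have h1 := tp_isPath hT x z
    rw [← (tp hT x z).take_spec hq2] at h1
    exact h1.of_append_right
  have hp1path : p₁.IsPath := by
    have := tp_isPath hT y x
    rw [hsplit] at this
    exact this.of_append_left
  have hmtail : m ∉ ((tp hT x z).dropUntil m hq2).support.tail := by
    have hnd := hq2path.support_nodup
    rw [Walk.support_eq_cons] at hnd
    exact (List.nodup_cons.mp hnd).1
  have hpath : (p₁.append ((tp hT x z).dropUntil m hq2)).IsPath := by
    rw [Walk.isPath_def, Walk.support_append]
    refine List.Nodup.append hp1path.support_nodup ?_ ?_
    · have hnd := hq2path.support_nodup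
      rw [Walk.support_eq_cons] at hnd
      exact (List.nodup_cons.mp hnd).2
    · intro a hap haq
      have haq' : a ∈ (tp hT x z).support :=
        (tp hT x z).support_dropUntil_subset hq2 (List.mem_of_mem_tail haq)
      have ham : a = m := hmin a hap haq'
      rw [ham] at haq
      exact hmtail haq
  have heq := tp_unique hT _ hpath
  refine ⟨m, ?_, hq2, ?_⟩
  · have hm1 : m ∈ (tp hT y x).support := by
      rw [hsplit, Walk.mem_support_append_iff]
      left; exact Walk.end_mem_support _
    by_contra hmc
    exact notSep_symm hT hmc hm1
  · rw [← heq, Walk.mem_support_append_iff]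
    left; exact Walk.end_mem_support _


variable {G : SimpleGraph V} {bag : ι → Set V}

/-- Convexity of the subtree of bags containing a vertex. -/
lemma convex (hdec : IsTreeDecomp G T bag) {v : V} {x y z : ι}
    (hx : v ∈ bag x) (hy : v ∈ bag y) (hz : z ∈ (tp hdec.1 x y).support) : v ∈ bag z := by
  classical
  obtain ⟨hT, _, _, hconn⟩ := hdec
  have hreach : (T.induce {i | v ∈ bag i}).Reachable ⟨x, hx⟩ ⟨y, hy⟩ :=
    (hconn v).preconnected _ _
  obtain ⟨q⟩ := hreach
  have hq : ∀ i ∈ (q.map (SimpleGraph.Embedding.induce {i | v ∈ bag i}).toHom).support,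
      v ∈ bag i := by
    intro i hi
    rw [Walk.support_map] at hi
    obtain ⟨j, hj, rfl⟩ := List.mem_map.mp hi
    exact j.2
  have : z ∈ (q.map (SimpleGraph.Embedding.induce {i | v ∈ bag i}).toHom).support := by
    by_contra hzc
    exact avoid hT _ hzc hz
  exact hq z this

/-- Contrapositive of convexity. -/
lemma convex_not (hdec : IsTreeDecomp G T bag) {v : V} {x y c : ι}
    (hx : v ∈ bag x) (hy : v ∈ bag y) (hc : v ∉ bag c) : c ∉ (tp hdec.1 x y).support :=
  fun h => hc (convex hdec hx hy h)


/-- All bags of vertices of a connected set avoiding `bag c` are on the same side of `c`. -/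
lemma side (hdec : IsTreeDecomp G T bag) {C' : Set V} {c : ι}
    (hc : ∀ u ∈ C', u ∉ bag c) :
    ∀ {u u' : V}, (grestrict G C').Walk u u' → u ∈ C' →
      ∀ j, u ∈ bag j → ∀ j', u' ∈ bag j' → c ∉ (tp hdec.1 j j').support := by
  intro u u' w
  induction w with
  | nil =>
    intro hu j hj j' hj'
    exact convex_not hdec hj hj' (hc _ hu)
  | @cons a b y h q ih =>
    intro hu j hj j' hj'
    have hb : b ∈ C' := Set.notMem_compl_iff.mp h.2.2
    obtain ⟨j₁, hj₁a, hj₁b⟩ := hdec.2.2.1 a b h.1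
    exact notSep_trans hdec.1 (convex_not hdec hj hj₁a (hc _ hu)) (ih hb j₁ hj₁b j' hj')

/-- The sliding lemma: the neighborhood of a connected region, within `bag c`,
is contained in the intersection of two adjacent distinct bags. -/
lemma slide (hdec : IsTreeDecomp G T bag) {C' : Set V}
    (hconn : ∀ u ∈ C', ∀ u' ∈ C', (grestrict G C').Reachable u u')
    {u₀ : V} {j₀ : ι} (hu₀ : u₀ ∈ C') (hj₀ : u₀ ∈ bag j₀) :
    ∀ (n : ℕ) (c : ι), (tp hdec.1 c j₀).length = n → (∀ u ∈ C', u ∉ bag c) →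
    ∃ p q : ι, T.Adj p q ∧ bag p ≠ bag q ∧
      ∀ v : V, v ∈ bag c → (∃ u ∈ C', G.Adj u v) → v ∈ bag p ∧ v ∈ bag q := by
  intro n
  induction n using Nat.strong_induction_on with
  | _ n ih =>
  intro c hlen hc
  have hcj : c ≠ j₀ := fun h => hc u₀ hu₀ (h ▸ hj₀)
  obtain ⟨c₁, hadj, hdecomp, hcnot, hlt⟩ := tp_decomp hdec.1 hcj
  have key : ∀ v : V, v ∈ bag c → (∃ u ∈ C', G.Adj u v) → v ∈ bag c₁ := by
    rintro v hvc ⟨u, hu, huv⟩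
    obtain ⟨j, hju, hjv⟩ := hdec.2.2.1 u v huv
    obtain ⟨wk⟩ := hconn u hu u₀ hu₀
    have hside : c ∉ (tp hdec.1 j j₀).support := side hdec hc wk hu j hju j₀ hj₀
    have hcj' : c ≠ j := fun h => hc u hu (h ▸ hju)
    obtain ⟨d, hadj', hdecomp', hcnot', _⟩ := tp_decomp hdec.1 hcj'
    have hd : d = c₁ := entry_unique hdec.1 hadj' hadj hcnot' hcnot hside
    have hdmem : d ∈ (tp hdec.1 c j).support := by
      rw [hdecomp', Walk.support_cons]
      exact List.mem_cons_of_mem _ (Walk.start_mem_support _)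
    exact hd ▸ convex hdec hvc hjv hdmem
  by_cases hbag : bag c = bag c₁
  · have hc₁ : ∀ u ∈ C', u ∉ bag c₁ := fun u hu => hbag ▸ hc u hu
    obtain ⟨p, q, h1, h2, h3⟩ :=
      ih (tp hdec.1 c₁ j₀).length (by rw [← hlen]; exact hlt) c₁ rfl hc₁
    exact ⟨p, q, h1, h2, fun v hvc hadjv => h3 v (hbag ▸ hvc) hadjv⟩
  · exact ⟨c, c₁, hadj, hbag, fun v hvc hadjv => ⟨hvc, key v hvc hadjv⟩⟩

end Stmt3Aux

namespace Stmt3Comp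

open SimpleGraph Walk

variable {G : SimpleGraph V}

/-- The connected component of `s` in `G − S'`. -/
def comp (G : SimpleGraph V) (S' : Set V) (s : V) : Set V :=
  {v | (gdelete G S').Reachable s v}

lemma walk_end_not_mem {S' : Set V} : ∀ {a b : V}, (gdelete G S').Walk a b → a ∉ S' → b ∉ S' := by
  intro a b w
  induction w with
  | nil => exact id
  | cons h q ih => exact fun _ => ih h.2.2

lemma walk_closed {S₀ C : Set V} (hclose : ∀ u ∈ C, ∀ v ∈ S₀ᶜ, G.Adj u v → v ∈ C) :
    ∀ {a b : V}, (gdelete G S₀).Walk a b → a ∈ C → b ∈ C := by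
  intro a b w
  induction w with
  | nil => exact id
  | cons h q ih => exact fun ha => ih (hclose _ ha _ h.2.2 h.1)

lemma comp_subset {S' : Set V} {s : V} (hs : s ∉ S') : comp G S' s ⊆ S'ᶜ := by
  intro v hv
  obtain ⟨w⟩ := hv
  exact walk_end_not_mem w hs

lemma comp_isCompOf {S' : Set V} {s : V} (hs : s ∉ S') :
    IsCompOf G S'ᶜ (comp G S' s) := by
  classical
  refine ⟨comp_subset hs, ⟨s, Reachable.refl s⟩, ?_, ?_⟩
  · intro u hu v hv
    obtain ⟨wu⟩ := hu
    obtain ⟨wv⟩ := hv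
    have w : (gdelete G S').Walk u v := wu.reverse.append wv
    have hsupp : ∀ z ∈ w.support, z ∈ comp G S' s := by
      intro z hz
      exact ⟨wu.append (w.takeUntil z hz)⟩
    refine ⟨w.transfer _ ?_⟩
    intro e he
    induction e with
    | h a b =>
      have hadj : (gdelete G S').Adj a b := w.adj_of_mem_edges he
      have ha : a ∈ comp G S' s := hsupp a (w.fst_mem_support_of_mem_edges he)
      have hb : b ∈ comp G S' s := hsupp b (w.snd_mem_support_of_mem_edges he)
      exact ⟨hadj.1, by simpa using ha, by simpa using hb⟩
  · intro u hu v hv hadj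
    obtain ⟨wu⟩ := hu
    exact ⟨wu.append (Walk.cons ⟨hadj, comp_subset hs ⟨wu⟩, hv⟩ Walk.nil)⟩

lemma isCompOf_eq_comp {S' C : Set V} {s : V} (hC : IsCompOf G S'ᶜ C) (hs : s ∈ C) :
    C = comp G S' s := by
  apply Set.eq_of_subset_of_subset
  · intro u hu
    obtain ⟨w⟩ := hC.2.2.1 s hs u hu
    refine ⟨w.transfer _ ?_⟩
    intro e he
    induction e with
    | h a b =>
      have hadj : (grestrict G C).Adj a b := w.adj_of_mem_edges he
      have ha : a ∈ C := Set.notMem_compl_iff.mp hadj.2.1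
      have hb : b ∈ C := Set.notMem_compl_iff.mp hadj.2.2
      exact ⟨hadj.1, hC.1 ha, hC.1 hb⟩
  · intro v hv
    obtain ⟨w⟩ := hv
    exact walk_closed hC.2.2.2 w hs

end Stmt3Comp

lemma ncard_inter_le_of_ne [Fintype V] {A B : Set V} {w : ℕ} (hne : A ≠ B)
    (hA : A.ncard ≤ w + 1) (hB : B.ncard ≤ w + 1) : (A ∩ B).ncard ≤ w := by
  by_cases h1 : A ∩ B = A
  · have hsub : A ⊆ B := Set.inter_eq_left.mp h1
    have hss : A ∩ B ⊂ B := by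
      rw [h1]
      exact ssubset_of_subset_of_ne hsub hne
    have := Set.ncard_lt_ncard hss (Set.toFinite B)
    omega
  · have hss : A ∩ B ⊂ A := ssubset_of_subset_of_ne Set.inter_subset_left h1
    have := Set.ncard_lt_ncard hss (Set.toFinite A)
    omega

theorem stmt3' [Fintype V] {ι : Type} (G : SimpleGraph V) (T : SimpleGraph ι)
    (bag : ι → Set V) (w : ℕ)
    (hT : IsTreeDecomp G T bag) (hw : ∀ i, (bag i).ncard ≤ w + 1) (S : Set V) :
    ∃ S' : Set V, S ⊆ S' ∧ S'.ncard ≤ 2 * (w + 1) * S.ncard ∧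
      ∀ C : Set V, IsCompOf G S'ᶜ C → (gnbhd G C ∩ S').ncard ≤ 2 * w := by
  classical
  rcases Nat.eq_zero_or_pos w with hw0 | hwpos
  · -- w = 0 : no edges at all
    subst hw0
    refine ⟨S, subset_rfl, by omega, ?_⟩
    intro C hC
    have hempty : gnbhd G C = ∅ := by
      ext v
      simp only [Set.mem_empty_iff_false, iff_false]
      rintro ⟨hvC, u, hu, hadj⟩
      obtain ⟨i, hui, hvi⟩ := hT.2.2.1 u v hadj
      have : 1 < (bag i).ncard := Set.one_lt_ncard_iff (Set.toFinite _) |>.mpr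
        ⟨u, v, hui, hvi, hadj.ne⟩
      have := hw i
      omega
    rw [hempty]
    simp
  obtain ⟨i0⟩ : Nonempty ι := hT.1.isConnected.nonempty
  have main : ∀ F : Finset V, ∃ S' : Set V, ↑F ⊆ S' ∧ S'.ncard ≤ 2 * (w + 1) * F.card ∧
      ∀ C : Set V, IsCompOf G S'ᶜ C →
        ∃ (t₁ t₂ : ι) (A₁ A₂ : Set V), A₁ ⊆ bag t₁ ∧ A₂ ⊆ bag t₂ ∧
          A₁.ncard ≤ w ∧ A₂.ncard ≤ w ∧ gnbhd G C ∩ S' ⊆ A₁ ∪ A₂ := by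
    intro F
    induction F using Finset.induction_on with
    | empty =>
      refine ⟨∅, by simp, by simp, ?_⟩
      intro C _
      exact ⟨i0, i0, ∅, ∅, by simp, by simp, by simp, by simp, by simp⟩
    | @insert a s ha IH =>
      obtain ⟨S₀, hsub₀, hcard₀, hinv₀⟩ := IH
      have hins : (insert a s).card = s.card + 1 := Finset.card_insert_of_notMem ha
      have hsub₀' : (s : Set V) ⊆ S₀ := hsub₀
      by_cases haS₀ : a ∈ S₀
      · refine ⟨S₀, by rw [Finset.coe_insert]; exact Set.insert_subset haS₀ hsub₀', ?_, hinv₀⟩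
        calc S₀.ncard ≤ 2 * (w + 1) * s.card := hcard₀
          _ ≤ 2 * (w + 1) * (insert a s).card := by
              exact Nat.mul_le_mul_left _ (Finset.card_le_card (Finset.subset_insert a s))
      · -- main case
        have hCcomp : IsCompOf G S₀ᶜ (Stmt3Comp.comp G S₀ a) := Stmt3Comp.comp_isCompOf haS₀
        set C : Set V := Stmt3Comp.comp G S₀ a with hCdef
        have haC : a ∈ C := SimpleGraph.Reachable.refl a
        obtain ⟨t₁, t₂, A₁, A₂, hA₁b, hA₂b, hA₁c, hA₂c, hNC⟩ := hinv₀ C hCcomp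
        obtain ⟨is, his⟩ := hT.2.1 a
        obtain ⟨c, hm12, hm1s, hm2s⟩ := Stmt3Aux.median hT.1 t₁ t₂ is
        set S' : Set V := S₀ ∪ insert a (bag c ∩ C) with hS'def
        have hS₀S' : S₀ ⊆ S' := Set.subset_union_left
        have haS' : a ∈ S' := Set.mem_union_right _ (Set.mem_insert _ _)
        have hbcC : bag c ∩ C ⊆ S' := fun x hx =>
          Set.mem_union_right _ (Set.mem_insert_of_mem _ hx)
        refine ⟨S', ?_, ?_, ?_⟩
        · rw [Finset.coe_insert]
          exact Set.insert_subset haS' (hsub₀'.trans hS₀S')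
        · have h1 : S'.ncard ≤ S₀.ncard + ((bag c ∩ C).ncard + 1) := by
            refine (Set.ncard_union_le _ _).trans ?_
            have := Set.ncard_insert_le a (bag c ∩ C)
            omega
          have h2 : (bag c ∩ C).ncard ≤ w + 1 :=
            (Set.ncard_le_ncard Set.inter_subset_left (Set.toFinite _)).trans (hw c)
          rw [hins]
          calc S'.ncard ≤ S₀.ncard + (w + 2) := by omega
            _ ≤ 2 * (w + 1) * s.card + 2 * (w + 1) := by
                have : w + 2 ≤ 2 * (w + 1) := by omega
                omega
            _ = 2 * (w + 1) * (s.card + 1) := by ring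
        · intro C' hC'
          have hC'S₀c : C' ⊆ S₀ᶜ := hC'.1.trans (Set.compl_subset_compl.mpr hS₀S')
          by_cases hCC' : ∃ u₁, u₁ ∈ C' ∧ u₁ ∈ C
          · -- Case B : C' ⊆ C
            obtain ⟨u₁, hu₁C', hu₁C⟩ := hCC'
            have hC'C : C' ⊆ C := by
              intro u hu
              obtain ⟨wk⟩ := hC'.2.2.1 u₁ hu₁C' u hu
              refine Stmt3Comp.walk_closed ?_ wk hu₁C
              intro x hx v hv hadj
              rw [compl_compl] at hv
              exact hCcomp.2.2.2 x hx v (hC'S₀c hv) hadj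
            have hcbag : ∀ u ∈ C', u ∉ bag c := by
              intro u hu hb
              exact hC'.1 hu (hbcC ⟨hb, hC'C hu⟩)
            obtain ⟨u₀, hu₀⟩ := hC'.2.1
            obtain ⟨j₀, hj₀⟩ := hT.2.1 u₀
            obtain ⟨p, q, hpq, hbagne, hslide⟩ :=
              Stmt3Aux.slide hT hC'.2.2.1 hu₀ hj₀ (Stmt3Aux.tp hT.1 c j₀).length c rfl hcbag
            have hAnew : (bag p ∩ bag q).ncard ≤ w :=
              ncard_inter_le_of_ne hbagne (hw p) (hw q)
            -- "alive" helper
            have hal : ∀ (v : V) (t : ι), v ∈ bag t → v ∉ bag c →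
                (∃ u ∈ C', G.Adj u v) → c ∉ (Stmt3Aux.tp hT.1 t j₀).support := by
              rintro v t hvt hvc ⟨u, hu, huv⟩
              obtain ⟨jv, hjvu, hjvv⟩ := hT.2.2.1 u v huv
              have h1 : c ∉ (Stmt3Aux.tp hT.1 t jv).support :=
                Stmt3Aux.convex_not hT hvt hjvv hvc
              obtain ⟨wk⟩ := hC'.2.2.1 u hu u₀ hu₀
              have h2 : c ∉ (Stmt3Aux.tp hT.1 jv j₀).support :=
                Stmt3Aux.side hT hcbag wk hu jv hjvu j₀ hj₀
              exact Stmt3Aux.notSep_trans hT.1 h1 h2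
            have excl12 : c ∉ (Stmt3Aux.tp hT.1 t₁ j₀).support →
                c ∉ (Stmt3Aux.tp hT.1 t₂ j₀).support → False := fun h1 h2 =>
              (Stmt3Aux.notSep_trans hT.1 h1 (Stmt3Aux.notSep_symm hT.1 h2)) hm12
            have excl13 : c ∉ (Stmt3Aux.tp hT.1 t₁ j₀).support →
                c ∉ (Stmt3Aux.tp hT.1 is j₀).support → False := fun h1 h2 =>
              (Stmt3Aux.notSep_trans hT.1 h1 (Stmt3Aux.notSep_symm hT.1 h2)) hm1s
            have excl23 : c ∉ (Stmt3Aux.tp hT.1 t₂ j₀).support →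
                c ∉ (Stmt3Aux.tp hT.1 is j₀).support → False := fun h1 h2 =>
              (Stmt3Aux.notSep_trans hT.1 h1 (Stmt3Aux.notSep_symm hT.1 h2)) hm2s
            have hmain : ∀ v ∈ gnbhd G C' ∩ S', v ∈ bag p ∩ bag q ∨
                (v ∈ A₁ ∧ c ∉ (Stmt3Aux.tp hT.1 t₁ j₀).support) ∨
                (v ∈ A₂ ∧ c ∉ (Stmt3Aux.tp hT.1 t₂ j₀).support) ∨
                (v = a ∧ c ∉ (Stmt3Aux.tp hT.1 is j₀).support) := by
              rintro v ⟨⟨hvC', u, hu, huv⟩, hvS'⟩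
              by_cases hvc : v ∈ bag c
              · exact Or.inl (by
                  have := hslide v hvc ⟨u, hu, huv⟩
                  exact ⟨this.1, this.2⟩)
              · rcases hvS' with hvS₀ | hva
                · have hvnC : v ∉ C := fun h => (hCcomp.1 h) hvS₀
                  have hvN : v ∈ gnbhd G C ∩ S₀ :=
                    ⟨⟨hvnC, u, hC'C hu, huv⟩, hvS₀⟩
                  rcases hNC hvN with hv1 | hv2
                  · exact Or.inr (Or.inl ⟨hv1, hal v t₁ (hA₁b hv1) hvc ⟨u, hu, huv⟩⟩)
                  · exact Or.inr (Or.inr (Or.inl ⟨hv2, hal v t₂ (hA₂b hv2) hvc ⟨u, hu, huv⟩⟩))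
                · rcases hva with rfl | hvbc
                  · exact Or.inr (Or.inr (Or.inr ⟨rfl, hal v is his hvc ⟨u, hu, huv⟩⟩))
                  · exact absurd hvbc.1 hvc
            by_cases hal1 : c ∉ (Stmt3Aux.tp hT.1 t₁ j₀).support
            · refine ⟨p, t₁, bag p ∩ bag q, A₁, Set.inter_subset_left, hA₁b, hAnew, hA₁c, ?_⟩
              intro v hv
              rcases hmain v hv with h | ⟨h, _⟩ | ⟨_, h2⟩ | ⟨_, h3⟩
              · exact Or.inl h
              · exact Or.inr h
              · exact (excl12 hal1 h2).elim
              · exact (excl13 hal1 h3).elim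
            · by_cases hal2 : c ∉ (Stmt3Aux.tp hT.1 t₂ j₀).support
              · refine ⟨p, t₂, bag p ∩ bag q, A₂, Set.inter_subset_left, hA₂b, hAnew, hA₂c, ?_⟩
                intro v hv
                rcases hmain v hv with h | ⟨_, h1⟩ | ⟨h, _⟩ | ⟨_, h3⟩
                · exact Or.inl h
                · exact (hal1 h1).elim
                · exact Or.inr h
                · exact (excl23 hal2 h3).elim
              · by_cases hal3 : c ∉ (Stmt3Aux.tp hT.1 is j₀).support
                · refine ⟨p, is, bag p ∩ bag q, {a}, Set.inter_subset_left,
                    Set.singleton_subset_iff.mpr his, hAnew, ?_, ?_⟩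
                  · rw [Set.ncard_singleton]; exact hwpos
                  · intro v hv
                    rcases hmain v hv with h | ⟨_, h1⟩ | ⟨_, h2⟩ | ⟨h, _⟩
                    · exact Or.inl h
                    · exact (hal1 h1).elim
                    · exact (hal2 h2).elim
                    · exact Or.inr (by simp [h])
                · refine ⟨p, t₁, bag p ∩ bag q, ∅, Set.inter_subset_left, by simp,
                    hAnew, by simp, ?_⟩
                  intro v hv
                  rcases hmain v hv with h | ⟨_, h1⟩ | ⟨_, h2⟩ | ⟨_, h3⟩
                  · exact Or.inl h
                  · exact (hal1 h1).elim
                  · exact (hal2 h2).elim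
                  · exact (hal3 h3).elim
          · -- Case A : C' disjoint from C
            push_neg at hCC'
            have hextra : ∀ v ∈ S', v ∉ S₀ → v ∈ C := by
              intro v hv hv₀
              rcases hv with h | h
              · exact absurd h hv₀
              · rcases h with rfl | h
                · exact haC
                · exact h.2
            have hC'comp₀ : IsCompOf G S₀ᶜ C' := by
              refine ⟨hC'S₀c, hC'.2.1, hC'.2.2.1, ?_⟩
              intro u hu v hv hadj
              by_cases hvS' : v ∈ S'
              · have hvC : v ∈ C := hextra v hvS' hv
                have : u ∈ C := hCcomp.2.2.2 v hvC u (hC'S₀c hu) hadj.symm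
                exact absurd this (hCC' u hu)
              · exact hC'.2.2.2 u hu v hvS' hadj
            obtain ⟨t₁', t₂', A₁', A₂', h1, h2, h3, h4, h5⟩ := hinv₀ C' hC'comp₀
            refine ⟨t₁', t₂', A₁', A₂', h1, h2, h3, h4, ?_⟩
            rintro v ⟨⟨hvC', u, hu, huv⟩, hvS'⟩
            by_cases hvS₀ : v ∈ S₀
            · exact h5 ⟨⟨hvC', u, hu, huv⟩, hvS₀⟩
            · have hvC : v ∈ C := hextra v hvS' hvS₀
              have : u ∈ C := hCcomp.2.2.2 v hvC u (hC'S₀c hu) huv.symm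
              exact absurd this (hCC' u hu)
  obtain ⟨S', h1, h2, h3⟩ := main S.toFinset
  rw [Set.coe_toFinset] at h1
  rw [← Set.ncard_eq_toFinset_card' S] at h2
  refine ⟨S', h1, h2, ?_⟩
  intro C hC
  obtain ⟨t₁, t₂, A₁, A₂, _, _, hc1, hc2, hsub⟩ := h3 C hC
  calc (gnbhd G C ∩ S').ncard ≤ (A₁ ∪ A₂).ncard :=
        Set.ncard_le_ncard hsub (Set.toFinite _)
    _ ≤ A₁.ncard + A₂.ncard := Set.ncard_union_le _ _
    _ ≤ 2 * w := by omega

/-- protrusion partitioning: given a tree decomposition of `G` of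
width `w` and `S ⊆ V(G)`, there is a superset `S' ⊇ S` of size at most `2(w+1)|S|` such
that every connected component `C` of `G − S'` satisfies `|N_G(C) ∩ S'| ≤ 2w`. -/
theorem stmt3 [Fintype V] {ι : Type} (G : SimpleGraph V) (T : SimpleGraph ι)
    (bag : ι → Set V) (w : ℕ)
    (hT : IsTreeDecomp G T bag) (hw : ∀ i, (bag i).ncard ≤ w + 1) (S : Set V) :
    ∃ S' : Set V, S ⊆ S' ∧ S'.ncard ≤ 2 * (w + 1) * S.ncard ∧
      ∀ C : Set V, IsCompOf G S'ᶜ C → (gnbhd G C ∩ S').ncard ≤ 2 * w := by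
  exact stmt3' G T bag w hT hw S
end

section
/- Let (G, X, M, ℓ) be an instance of the annotated odd cycle transversal problem and let H ⊆ V(G) \ X be a set of vertices such that (1) H intersects all important X-paths of G, (2) (G − X) − H has at most α connected components, and (3) each connected component of (G − X) − H has at most δ neighbors in H. Then there exists a set Z ⊆ V(G) with X ∪ H ⊆ Z and |Z| ≤ |X| + |H| + α·δ·κ(δ, δ−1, |X|+δ) such that (G, X, M, ℓ) has a solution (a set S ⊆ V(G) of size at most ℓ with G − S bipartite and admitting a proper 2-coloring respecting M) if and only if it has such a solution S with S ⊆ Z. Here κ(n, m, r) denotes the maximum, over all labeled graphs (G, L, f) with |L| ≤ r and over all sets of n terminals, of the number of distinct cut characteristics induced by separators of size at most m. -/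
set_option maxHeartbeats 1000000

variable {V : Type}

/-- The set of internal vertices of a walk `W : G.Walk p q`
(all support vertices except the endpoints `p` and `q`). -/
def walkInterior {G : SimpleGraph V} {p q : V} (W : G.Walk p q) : Set V :=
  {v | v ∈ W.support ∧ v ≠ p ∧ v ≠ q}

/-- `W` encodes an `X`-path between `p, q ∈ X`: a simple path `v_1, …, v_r` in `G − X`
together with the two distinct edges `{p, v_1}` and `{v_r, q}` of `G`.  It is encoded as a
walk from `p` to `q` of length at least `2` whose internal vertices avoid `X`, which is a
simple path if `p ≠ q` and a cycle if `p = q` (the latter makes the two attachment edges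
distinct). -/
def IsXPath (G : SimpleGraph V) (X : Set V) {p q : V} (W : G.Walk p q) : Prop :=
  p ∈ X ∧ q ∈ X ∧ 2 ≤ W.length ∧ (∀ v ∈ walkInterior W, v ∉ X) ∧
    ((p ≠ q ∧ W.IsPath) ∨ (∃ h : p = q, (W.copy rfl h.symm).IsCycle))

/-- The length of the `X`-path encoded by `W`, i.e. its number of internal vertices. -/
def xpLen {G : SimpleGraph V} {p q : V} (W : G.Walk p q) : ℕ := W.length - 1

/-- An important `p`–`q` `X`-path (w.r.t. the monochromatic pairs `M`): (a) its length is
odd, `p ≠ q` and `{p,q} ∉ M`, or (b) its length is even and `{p,q} ∉ E(G)`. -/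
def IsImpXPath (G : SimpleGraph V) (X : Set V) (M : Set (Sym2 V)) {p q : V}
    (W : G.Walk p q) : Prop :=
  IsXPath G X W ∧
    ((Odd (xpLen W) ∧ p ≠ q ∧ s(p, q) ∉ M) ∨ (Even (xpLen W) ∧ ¬ G.Adj p q))

/-- `M` consists of unordered pairs of distinct vertices of `X`. -/
def PairsOver (M : Set (Sym2 V)) (X : Set V) : Prop :=
  ∀ e ∈ M, ∃ u v : V, u ∈ X ∧ v ∈ X ∧ u ≠ v ∧ e = s(u, v)

/-- `G − S` is bipartite via a proper 2-coloring that moreover assigns equal colors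
to every (surviving) monochromatic pair in `M`. -/
def AnnColoring (G : SimpleGraph V) (M : Set (Sym2 V)) (S : Set V) : Prop :=
  ∃ c : V → Bool, (∀ u v : V, u ∉ S → v ∉ S → G.Adj u v → c u ≠ c v) ∧
    ∀ u v : V, u ∉ S → v ∉ S → s(u, v) ∈ M → c u = c v

/-- `R_G(X, S)`: the set of vertices reachable from `X \ S` in `G − S`. -/
def greach (G : SimpleGraph V) (X S : Set V) : Set V :=
  {v | v ∉ S ∧ ∃ x ∈ X \ S, (gdelete G S).Reachable x v}

/-- `L(t, S)`: the set of labels reachable from the terminal `t` in `G − S`,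
for a labeling `f` of the vertices of `G` by sets of labels. -/
def reachLabels {L : Type} (G : SimpleGraph V) (f : V → Set L) (S : Set V) (t : V) :
    Set L :=
  ⋃ v ∈ greach G {t} S, f v

/-- The set of distinct cut characteristics `K(S, T) = (L(t_1,S), …, L(t_n,S))`
induced by separators `S` of size at most `m`, w.r.t. the terminal sequence `T`. -/
def cutChars {L : Type} (G : SimpleGraph V) (f : V → Set L) {n : ℕ} (T : Fin n → V)
    (m : ℕ) : Set (Fin n → Set L) :=
  {k | ∃ S : Set V, S.ncard ≤ m ∧ k = fun i => reachLabels G f S (T i)}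

/-- `κ(n, m, r)`: the maximum number of distinct cut characteristics induced by
separators of at most `m` vertices, over all (finite) labeled graphs with at most `r`
labels and all sequences of `n` distinct terminals. -/
noncomputable def kappa (n m r : ℕ) : ℕ :=
  sSup {k : ℕ | ∃ (N : ℕ) (G : SimpleGraph (Fin N)) (f : Fin N → Set (Fin r))
    (T : Fin n → Fin N), Function.Injective T ∧ k = (cutChars G f T m).ncard}


section AuxBasic

variable {G : SimpleGraph V}

lemma gdelete_adj {S : Set V} {u v : V} :
    (gdelete G S).Adj u v ↔ G.Adj u v ∧ u ∉ S ∧ v ∉ S := Iff.rfl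

lemma grestrict_adj {T : Set V} {u v : V} :
    (grestrict G T).Adj u v ↔ G.Adj u v ∧ u ∈ T ∧ v ∈ T := by
  simp [grestrict, gdelete_adj]

/-- homomorphism from a restriction into `G` -/
def grestrictHom (G : SimpleGraph V) (T : Set V) : grestrict G T →g G :=
  ⟨id, fun h => (grestrict_adj.mp h).1⟩

lemma grestrictHom_coe {T : Set V} : ⇑(grestrictHom G T) = id := rfl

lemma grestrict_walk_support {T : Set V} {u v : V} (W : (grestrict G T).Walk u v) :
    ∀ z ∈ W.support, z = u ∨ z ∈ T := by
  induction W with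
  | nil => intro z hz; simp at hz; exact Or.inl hz
  | cons h W ih =>
    intro z hz
    rw [SimpleGraph.Walk.support_cons] at hz
    rcases List.mem_cons.mp hz with h1 | h2
    · exact Or.inl h1
    · rcases ih z h2 with h3 | h3
      · exact Or.inr (h3 ▸ (grestrict_adj.mp h).2.2)
      · exact Or.inr h3

lemma grestrict_reachable_mono {T T' : Set V} (hTT : T ⊆ T') {u v : V}
    (h : (grestrict G T).Reachable u v) : (grestrict G T').Reachable u v := by
  refine SimpleGraph.Reachable.mono ?_ h
  intro a b hab
  rw [grestrict_adj] at hab ⊢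
  exact ⟨hab.1, hTT hab.2.1, hTT hab.2.2⟩

lemma grestrict_reachable_trans {T : Set V} {u v w : V}
    (h1 : (grestrict G T).Reachable u v) (h2 : (grestrict G T).Reachable v w) :
    (grestrict G T).Reachable u w := h1.trans h2

/-- Parity of a proper-coloring along a walk whose support satisfies `P`. -/
lemma walk_parity {P : V → Prop} {cc : V → Bool}
    (hpr : ∀ a b, P a → P b → G.Adj a b → cc a ≠ cc b) {u v : V}
    (W : G.Walk u v) (hs : ∀ z ∈ W.support, P z) :
    (cc u = cc v ↔ Even W.length) := by
  induction W with
  | nil => simp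
  | @cons a b d h W ih =>
    have hPa : P a := hs a (by simp)
    have hPb : P b := hs b (by simp [SimpleGraph.Walk.support_cons])
    have hab : cc a ≠ cc b := hpr a b hPa hPb h
    have ih' := ih (fun z hz => hs z (by simp [SimpleGraph.Walk.support_cons]; tauto))
    rw [SimpleGraph.Walk.length_cons]
    rw [Nat.even_add_one]
    constructor
    · intro had
      intro hev
      have : cc b = cc d := ih'.mpr hev
      exact hab (had.trans this.symm)
    · intro hnev
      have : ¬ (cc b = cc d) := fun hc => hnev (ih'.mp hc)
      revert hab this
      cases cc a <;> cases cc b <;> cases cc d <;> simp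
section AuxXPath

open SimpleGraph Walk in
lemma xdemand {G : SimpleGraph V} {X : Set V} (M : Set (Sym2 V)) {H : Set V}
    (hHit : ∀ (p q : V) (W : G.Walk p q), IsImpXPath G X M W →
      (H ∩ walkInterior W).Nonempty)
    {b : V → Bool} (hb : ∀ u v, u ∉ X → v ∉ X → G.Adj u v → b u ≠ b v)
    {C : Set V} (hCsub : C ⊆ Xᶜ ∩ Hᶜ)
    (hCconn : ∀ u ∈ C, ∀ v ∈ C, (grestrict G C).Reachable u v)
    {S : Set V} {c : V → Bool}
    (hc1 : ∀ u v, u ∉ S → v ∉ S → G.Adj u v → c u ≠ c v)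
    (hc2 : ∀ u v, u ∉ S → v ∉ S → s(u,v) ∈ M → c u = c v)
    {x x' : V} (hx : x ∈ X) (hx' : x' ∈ X) (hxS : x ∉ S) (hx'S : x' ∉ S)
    {v v' : V} (hv : v ∈ C) (hv' : v' ∈ C) (hadj : G.Adj x v) (hadj' : G.Adj x' v') :
    xor (c x) (b v) = xor (c x') (b v') := by
  classical
  -- get a path from v to v' inside C
  obtain ⟨W0⟩ := hCconn v hv v' hv'
  set P0 : (grestrict G C).Path v v' := W0.toPath with hP0
  set P : G.Walk v v' := (P0 : (grestrict G C).Walk v v').map (grestrictHom G C) with hPdef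
  have hPpath : P.IsPath := by
    refine Walk.map_isPath_of_injective ?_ P0.2
    intro a b' h; exact h
  have hPsup : ∀ z ∈ P.support, z ∈ C := by
    intro z hz
    replace hz : z ∈ List.map (grestrictHom G C) (P0 : (grestrict G C).Walk v v').support := by
      rw [← Walk.support_map]; exact hz
    have hz' : z ∈ (P0 : (grestrict G C).Walk v v').support := by
      simpa [grestrictHom_coe] using hz
    rcases grestrict_walk_support _ z hz' with h1 | h1
    · exact h1 ▸ hv
    · exact h1
  have hxC : x ∉ C := fun hc => (hCsub hc).1 hx
  have hx'C : x' ∉ C := fun hc => (hCsub hc).1 hx'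
  have hxP : x ∉ P.support := fun hc => hxC (hPsup x hc)
  have hx'P : x' ∉ P.support := fun hc => hx'C (hPsup x' hc)
  have hparity : b v = b v' ↔ Even P.length := by
    refine walk_parity (P := fun z => z ∉ X) ?_ P (fun z hz => (hCsub (hPsup z hz)).1)
    intro a b' ha hb' hab; exact hb a b' ha hb' hab
  by_cases hxx : x = x'
  · -- same X vertex: show b v = b v'
    subst hxx
    have hbv : b v = b v' := by
      by_contra hne
      have hodd : ¬ Even P.length := fun he => hne (hparity.mpr he)
      have hvv' : v ≠ v' := by
        rintro rfl; exact hne rfl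
      -- build the cycle x - v - ... - v' - x
      set Wc : G.Walk x x := Walk.cons hadj (P.concat hadj'.symm) with hWc
      have hsupWc : Wc.support = x :: (P.support.concat x) := by
        rw [hWc, Walk.support_cons, Walk.support_concat, List.concat_eq_append]
      have hintWc : ∀ z ∈ walkInterior Wc, z ∈ C := by
        intro z hz
        obtain ⟨hzs, hzx, -⟩ := hz
        rw [hsupWc] at hzs
        rcases List.mem_cons.mp hzs with h1 | h1
        · exact absurd h1 hzx
        · rw [List.concat_eq_append, List.mem_append] at h1
          rcases h1 with h2 | h2
          · exact hPsup z h2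
          · simp at h2; exact absurd h2 hzx
      have himp : IsImpXPath G X M Wc := by
        constructor
        · refine ⟨hx, hx, ?_, ?_, Or.inr ⟨rfl, ?_⟩⟩
          · rw [hWc, Walk.length_cons, Walk.length_concat]; omega
          · intro z hz; exact (hCsub (hintWc z hz)).1
          · rw [Walk.copy_rfl_rfl]
            constructor
            · constructor
              · constructor
                rw [hWc, Walk.edges_cons, Walk.edges_concat]
                refine List.nodup_cons.mpr ⟨?_, ?_⟩
                · intro hmem
                  rw [List.concat_eq_append, List.mem_append] at hmem
                  rcases hmem with h2 | h2
                  · exact hxP (Walk.fst_mem_support_of_mem_edges P h2)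
                  · simp only [List.mem_singleton] at h2
                    rw [Sym2.eq_iff] at h2
                    rcases h2 with ⟨h3, h4⟩ | ⟨h3, h4⟩
                    · exact hxC (h4 ▸ hv)
                    · exact hvv' h4
                · refine List.Nodup.concat ?_ hPpath.isTrail.edges_nodup
                  intro hmem
                  exact hxP (Walk.snd_mem_support_of_mem_edges P hmem)
              · rw [hWc]; simp
            · rw [hsupWc]
              simp only [List.tail_cons]
              exact List.Nodup.concat hxP hPpath.support_nodup
        · right
          constructor
          · have hlen : Wc.length = P.length + 2 := by
              rw [hWc, Walk.length_cons, Walk.length_concat]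
            rw [xpLen, hlen]
            have h21 : P.length + 2 - 1 = P.length + 1 := by omega
            rw [h21]
            rcases Nat.even_or_odd P.length with he | ho
            · exact absurd he hodd
            · exact Odd.add_one ho
          · exact G.irrefl
      obtain ⟨h, hh, hint⟩ := hHit x x Wc himp
      exact (hCsub (hintWc h hint)).2 hh
    rw [hbv]
  · -- distinct X vertices
    set Wp : G.Walk x x' := Walk.cons hadj (P.concat hadj'.symm) with hWp
    have hsupWp : Wp.support = x :: (P.support.concat x') := by
      rw [hWp, Walk.support_cons, Walk.support_concat, List.concat_eq_append]
    have hintWp : ∀ z ∈ walkInterior Wp, z ∈ C := by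
      intro z hz
      obtain ⟨hzs, hzx, hzx'⟩ := hz
      rw [hsupWp] at hzs
      rcases List.mem_cons.mp hzs with h1 | h1
      · exact absurd h1 hzx
      · rw [List.concat_eq_append, List.mem_append] at h1
        rcases h1 with h2 | h2
        · exact hPsup z h2
        · rw [List.mem_singleton] at h2; exact absurd h2 hzx'
    have hxpath : IsXPath G X Wp := by
      refine ⟨hx, hx', ?_, ?_, Or.inl ⟨hxx, ?_⟩⟩
      · rw [hWp, Walk.length_cons, Walk.length_concat]; omega
      · intro z hz; exact (hCsub (hintWp z hz)).1
      · rw [Walk.isPath_def, hsupWp]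
        refine List.nodup_cons.mpr ⟨?_, ?_⟩
        · intro hc
          rw [List.concat_eq_append, List.mem_append] at hc
          rcases hc with h2 | h2
          · exact hxP h2
          · rw [List.mem_singleton] at h2; exact hxx h2
        · exact List.Nodup.concat hx'P hPpath.support_nodup
    have hlen : Wp.length = P.length + 2 := by
      rw [hWp, Walk.length_cons, Walk.length_concat]
    by_cases hbv : b v = b v'
    · -- odd X-path ⇒ M pair
      have hMmem : s(x, x') ∈ M := by
        by_contra hM'
        have himp : IsImpXPath G X M Wp := by
          refine ⟨hxpath, Or.inl ⟨?_, hxx, hM'⟩⟩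
          rw [xpLen, hlen]
          have h21 : P.length + 2 - 1 = P.length + 1 := by omega
          rw [h21]
          exact Even.add_one (hparity.mp hbv)
        obtain ⟨h, hh, hint⟩ := hHit x x' Wp himp
        exact (hCsub (hintWp h hint)).2 hh
      have hcEq : c x = c x' := hc2 x x' hxS hx'S hMmem
      rw [hcEq, hbv]
    · -- even X-path ⇒ edge
      have hAdj : G.Adj x x' := by
        by_contra hA
        have himp : IsImpXPath G X M Wp := by
          refine ⟨hxpath, Or.inr ⟨?_, hA⟩⟩
          rw [xpLen, hlen]
          have h21 : P.length + 2 - 1 = P.length + 1 := by omega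
          rw [h21]
          have hne : ¬ Even P.length := fun he => hbv (hparity.mpr he)
          rcases Nat.even_or_odd P.length with he | ho
          · exact absurd he hne
          · exact Odd.add_one ho
        obtain ⟨h, hh, hint⟩ := hHit x x' Wp himp
        exact (hCsub (hintWp h hint)).2 hh
      have hcc : c x ≠ c x' := hc1 x x' hxS hx'S hAdj
      revert hcc hbv
      cases c x <;> cases c x' <;> cases b v <;> cases b v' <;> simp

end AuxXPath
section AuxKey

/-- Reachability within `A \ T` in the restricted graph. -/
def ARch (G : SimpleGraph V) (A T : Set V) (u v : V) : Prop :=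
  (grestrict G (A \ T)).Reachable u v

lemma ARch.symm {G : SimpleGraph V} {A T : Set V} {u v : V} (h : ARch G A T u v) :
    ARch G A T v u := SimpleGraph.Reachable.symm h

lemma ARch.trans {G : SimpleGraph V} {A T : Set V} {u v w : V}
    (h : ARch G A T u v) (h' : ARch G A T v w) : ARch G A T u w :=
  SimpleGraph.Reachable.trans h h'

lemma ARch.refl {G : SimpleGraph V} {A T : Set V} {u : V} : ARch G A T u u :=
  SimpleGraph.Reachable.refl u

lemma ARch.step {G : SimpleGraph V} {A T : Set V} {u v : V}
    (h : G.Adj u v) (hu : u ∈ A) (hu' : u ∉ T) (hv : v ∈ A) (hv' : v ∉ T) :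
    ARch G A T u v :=
  SimpleGraph.Adj.reachable (grestrict_adj.mpr ⟨h, ⟨hu, hu'⟩, ⟨hv, hv'⟩⟩)

lemma reach_two_colorings {G : SimpleGraph V} {A' : Set V} {u v : V}
    (h : (grestrict G A').Reachable u v) (hu : u ∈ A')
    {P Q : V → Prop} (hP : ∀ z ∈ A', P z) (hQ : ∀ z ∈ A', Q z)
    {b c : V → Bool} (hbp : ∀ a b', P a → P b' → G.Adj a b' → b a ≠ b b')
    (hcp : ∀ a b', Q a → Q b' → G.Adj a b' → c a ≠ c b') :
    (b u = b v ↔ c u = c v) := by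
  obtain ⟨W⟩ := h
  set W' : G.Walk u v := W.map (grestrictHom G A') with hW'
  have hsup : ∀ z ∈ W'.support, z ∈ A' := by
    intro z hz
    replace hz : z ∈ List.map (grestrictHom G A') W.support := by
      rw [← SimpleGraph.Walk.support_map]; exact hz
    have hz' : z ∈ W.support := by simpa [grestrictHom_coe] using hz
    rcases grestrict_walk_support W z hz' with h1 | h1
    · exact h1 ▸ hu
    · exact h1
  have h1 := walk_parity hbp W' (fun z hz => hP _ (hsup z hz))
  have h2 := walk_parity hcp W' (fun z hz => hQ _ (hsup z hz))
  rw [h1, h2]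

open Classical in
lemma keyStep (G : SimpleGraph V) (X : Set V) (M : Set (Sym2 V))
    (hM : PairsOver M X)
    (H : Set V) (hH : H ⊆ Xᶜ)
    (hHit : ∀ (p q : V) (W : G.Walk p q), IsImpXPath G X M W →
      (H ∩ walkInterior W).Nonempty)
    (b : V → Bool) (hb : ∀ u v, u ∉ X → v ∉ X → G.Adj u v → b u ≠ b v)
    (C : Set V) (hC : IsCompOf G (Xᶜ ∩ Hᶜ) C)
    (B : Set V) (hB : B = gnbhd G C ∩ H)
    (S : Set V) (c : V → Bool)
    (hc1 : ∀ u v, u ∉ S → v ∉ S → G.Adj u v → c u ≠ c v)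
    (hc2 : ∀ u v, u ∉ S → v ∉ S → s(u,v) ∈ M → c u = c v)
    (R : Set V) (hR : R ⊆ C ∪ B)
    (hBal : ∀ h ∈ B, h ∉ R → h ∉ S)
    (hP1 : ∀ h ∈ B, h ∉ R → ∀ x ∈ X, x ∉ S → ∀ v ∈ C, v ∉ R → G.Adj x v →
      ARch G (C ∪ B) R h v →
      ∃ v' ∈ C, v' ∉ S ∧ G.Adj x v' ∧ ARch G (C ∪ B) S h v')
    (hP2 : ∀ h ∈ B, h ∉ R → ∀ h' ∈ B, h' ∉ R → ARch G (C ∪ B) R h h' →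
      ARch G (C ∪ B) S h h') :
    ∃ c' : V → Bool,
      (∀ u v : V, u ∉ (S \ (C ∪ B)) ∪ R → v ∉ (S \ (C ∪ B)) ∪ R → G.Adj u v → c' u ≠ c' v) ∧
      ∀ u v : V, u ∉ (S \ (C ∪ B)) ∪ R → v ∉ (S \ (C ∪ B)) ∪ R → s(u, v) ∈ M → c' u = c' v := by
  obtain ⟨hCsub, hCne, hCconn, hCclosed⟩ := hC
  set A : Set V := C ∪ B with hA
  have hBH : B ⊆ H := by rw [hB]; exact Set.inter_subset_right
  have hBC : ∀ h ∈ B, h ∉ C := by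
    intro h hh; rw [hB] at hh; exact hh.1.1
  have hAX : A ⊆ Xᶜ := by
    intro z hz
    rcases hz with hz | hz
    · exact (hCsub hz).1
    · exact hH (hBH hz)
  have hCX : ∀ z ∈ C, z ∉ X := fun z hz => (hCsub hz).1
  have hCH : ∀ z ∈ C, z ∉ H := fun z hz => (hCsub hz).2
  -- demand sources
  set DemSrc : V → V → Prop :=
    fun y w => w ∈ C ∧ w ∉ R ∧ G.Adj y w ∧ ((y ∈ X ∧ y ∉ S) ∨ (y ∈ B ∧ y ∉ R)) with hDS
  set d : V → V → Bool := fun y w => !(xor (c y) (b w)) with hd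
  have hdval : ∀ y w, d y w = !(xor (c y) (b w)) := fun y w => rfl
  -- consistency of demands
  have hcons : ∀ y w y' w', DemSrc y w → DemSrc y' w' → ARch G A R w w' →
      d y w = d y' w' := by
    have main : ∀ y w y' w', DemSrc y w → DemSrc y' w' → ARch G A R w w' →
        (y ∈ X ∧ y ∉ S) → d y w = d y' w' := by
      intro y w y' w' ⟨hwC, hwR, hyw, _⟩ ⟨hw'C, hw'R, hy'w', hsrc'⟩ hrch ⟨hyX, hyS⟩
      rcases hsrc' with ⟨hy'X, hy'S⟩ | ⟨hy'B, hy'R⟩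
      · -- X–X case
        have hxd := xdemand M hHit hb hCsub hCconn hc1 hc2 hyX hy'X hyS hy'S hwC hw'C hyw hy'w'
        rw [hdval, hdval, hxd]
      · -- X–B case
        have hrch2 : ARch G A R y' w' := ARch.step hy'w' (Or.inr hy'B) hy'R (Or.inl hw'C) hw'R
        have hrchy' : ARch G A R y' w := (hrch.trans hrch2.symm).symm
        obtain ⟨v'', hv''C, hv''S, hyv'', hrchS⟩ :=
          hP1 y' hy'B hy'R y hyX hyS w hwC hwR hyw hrchy'
        have hy'SS : y' ∉ S := hBal y' hy'B hy'R
        -- parity relation between b and c along the surviving connection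
        have hbc : (b y' = b v'' ↔ c y' = c v'') := by
          refine reach_two_colorings hrchS ⟨Or.inr hy'B, hy'SS⟩
            (P := fun z => z ∉ X) (Q := fun z => z ∉ S) ?_ ?_ hb hc1
          · intro z hz; exact hAX hz.1
          · intro z hz; exact hz.2
        have hbww : b w = b v'' := by
          have := xdemand M hHit hb hCsub hCconn hc1 hc2 hyX hyX hyS hyS hwC hv''C hyw hyv''
          revert this; cases c y <;> cases b w <;> cases b v'' <;> simp
        have hcyv : c y ≠ c v'' := hc1 y v'' hyS hv''S hyv''
        have hbw' : b y' ≠ b w' := hb y' w' (hH (hBH hy'B)) (hCX w' hw'C) hy'w'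
        rw [hdval, hdval]
        revert hbc hbww hcyv hbw'
        cases c y <;> cases b w <;> cases c y' <;> cases b w' <;>
          cases b y' <;> cases c v'' <;> cases b v'' <;> simp
    intro y w y' w' h1 h2 hrch
    rcases h1.2.2.2 with hsrc | hsrc
    · exact main y w y' w' h1 h2 hrch hsrc
    · rcases h2.2.2.2 with hsrc' | hsrc'
      · exact (main y' w' y w h2 h1 hrch.symm hsrc').symm
      · -- B–B case
        obtain ⟨hwC, hwR, hyw, -⟩ := h1
        obtain ⟨hw'C, hw'R, hy'w', -⟩ := h2
        obtain ⟨hyB, hyR⟩ := hsrc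
        obtain ⟨hy'B, hy'R⟩ := hsrc'
        have hr1 : ARch G A R y w := ARch.step hyw (Or.inr hyB) hyR (Or.inl hwC) hwR
        have hr2 : ARch G A R y' w' := ARch.step hy'w' (Or.inr hy'B) hy'R (Or.inl hw'C) hw'R
        have hrchyy : ARch G A R y y' := (hr1.trans hrch).trans hr2.symm
        have hrchS : ARch G A S y y' := hP2 y hyB hyR y' hy'B hy'R hrchyy
        have hySS : y ∉ S := hBal y hyB hyR
        have hy'SS : y' ∉ S := hBal y' hy'B hy'R
        have hbc : (b y = b y' ↔ c y = c y') := by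
          refine reach_two_colorings hrchS ⟨Or.inr hyB, hySS⟩
            (P := fun z => z ∉ X) (Q := fun z => z ∉ S) ?_ ?_ hb hc1
          · intro z hz; exact hAX hz.1
          · intro z hz; exact hz.2
        have hbw : b y ≠ b w := hb y w (hH (hBH hyB)) (hCX w hwC) hyw
        have hbw' : b y' ≠ b w' := hb y' w' (hH (hBH hy'B)) (hCX w' hw'C) hy'w'
        rw [hdval, hdval]
        revert hbc hbw hbw'
        cases c y <;> cases b w <;> cases c y' <;> cases b w' <;>
          cases b y <;> cases b y' <;> simp
  -- the flip function
  set HasD : V → Prop := fun v => ∃ y w, DemSrc y w ∧ ARch G A R w v with hHasD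
  set χ : V → Bool := fun v =>
    if h : HasD v then d h.choose h.choose_spec.choose else false with hχ
  have hχd : ∀ v y w, DemSrc y w → ARch G A R w v → χ v = d y w := by
    intro v y w hds hrch
    have hhd : HasD v := ⟨y, w, hds, hrch⟩
    rw [hχ]; simp only [dif_pos hhd]
    exact hcons _ _ y w hhd.choose_spec.choose_spec.1 hds
      (hhd.choose_spec.choose_spec.2.trans hrch.symm)
  -- the new coloring
  set c' : V → Bool := fun v => if v ∈ C ∧ v ∉ R then xor (χ v) (b v) else c v with hc'
  have hc'in : ∀ v, v ∈ C → v ∉ R → c' v = xor (χ v) (b v) := by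
    intro v h1 h2
    show (if v ∈ C ∧ v ∉ R then xor (χ v) (b v) else c v) = _
    rw [if_pos ⟨h1, h2⟩]
  have hc'out : ∀ v, ¬ (v ∈ C ∧ v ∉ R) → c' v = c v := by
    intro v h1
    show (if v ∈ C ∧ v ∉ R then xor (χ v) (b v) else c v) = _
    rw [if_neg h1]
  have hc'eq : ∀ v, v ∉ C → c' v = c v := by
    intro v hv
    exact hc'out v (fun hcon => hv hcon.1)
  -- aliveness facts
  set S' : Set V := (S \ A) ∪ R with hS'
  have halive : ∀ z, z ∉ S' → z ∉ C → z ∉ S := by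
    intro z hz hzC
    intro hzS
    rcases Classical.em (z ∈ A) with hA' | hA'
    · rcases hA' with h1 | h1
      · exact hzC h1
      · exact hBal z h1 (fun hr => hz (Or.inr hr)) hzS
    · exact hz (Or.inl ⟨hzS, hA'⟩)
  have hnotR : ∀ z, z ∉ S' → z ∉ R := fun z hz hr => hz (Or.inr hr)
  refine ⟨c', ?_, ?_⟩
  · -- adjacency
    have key : ∀ u v, u ∉ S' → v ∉ S' → G.Adj u v → (u ∈ C ∧ u ∉ R) → c' u ≠ c' v := by
      intro u v hu hv hadj ⟨huC, huR⟩
      by_cases hvC : v ∈ C ∧ v ∉ R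
      · -- both inside
        have hrch : ARch G A R u v :=
          ARch.step hadj (Or.inl huC) huR (Or.inl hvC.1) hvC.2
        have hbuv : b u ≠ b v := hb u v (hCX u huC) (hCX v hvC.1) hadj
        have hχuv : χ u = χ v := by
          by_cases hhd : HasD u
          · obtain ⟨y, w, hds, hr⟩ := hhd
            rw [hχd u y w hds hr, hχd v y w hds (hr.trans hrch)]
          · have hhd' : ¬ HasD v := by
              intro hhv
              obtain ⟨y, w, hds, hr⟩ := hhv
              exact hhd ⟨y, w, hds, hr.trans hrch.symm⟩
            show (if h : HasD u then d h.choose h.choose_spec.choose else false) =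
              (if h : HasD v then d h.choose h.choose_spec.choose else false)
            rw [dif_neg hhd, dif_neg hhd']
        rw [hc'in u huC huR, hc'in v hvC.1 hvC.2, hχuv]
        revert hbuv; cases χ v <;> cases b u <;> cases b v <;> simp
      · -- v outside C∖R
        have hvnC : v ∉ C := by
          intro hvC'
          have hvR : v ∈ R := by
            by_contra hr; exact hvC ⟨hvC', hr⟩
          exact hv (Or.inr hvR)
        -- v is in X or in B
        have hloc : v ∈ X ∨ v ∈ B := by
          by_cases hvX : v ∈ X
          · exact Or.inl hvX
          · by_cases hvH : v ∈ H
            · refine Or.inr ?_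
              rw [hB]
              exact ⟨⟨hvnC, ⟨u, huC, hadj⟩⟩, hvH⟩
            · exact absurd (hCclosed u huC v ⟨hvX, hvH⟩ hadj) hvnC
        have hds : DemSrc v u := by
          rw [hDS]
          refine ⟨huC, huR, hadj.symm, ?_⟩
          rcases hloc with hvX | hvB
          · refine Or.inl ⟨hvX, ?_⟩
            refine halive v hv hvnC
          · exact Or.inr ⟨hvB, hnotR v hv⟩
        have hχu : χ u = d v u := hχd u v u hds ARch.refl
        rw [hc'in u huC huR, hc'out v hvC, hχu, hdval]
        cases c v <;> cases b u <;> simp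
    intro u v hu hv hadj
    by_cases huC : u ∈ C ∧ u ∉ R
    · exact key u v hu hv hadj huC
    · by_cases hvC : v ∈ C ∧ v ∉ R
      · exact (key v u hv hu hadj.symm hvC).symm
      · -- both outside
        have huC' : u ∉ C := by
          intro h1
          exact huC ⟨h1, hnotR u hu⟩
        have hvC' : v ∉ C := by
          intro h1
          exact hvC ⟨h1, hnotR v hv⟩
        rw [hc'eq u huC', hc'eq v hvC']
        exact hc1 u v (halive u hu huC') (halive v hv hvC') hadj
  · -- M condition
    intro u v hu hv hM'
    obtain ⟨u', v', hu'X, hv'X, -, he⟩ := hM _ hM'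
    have huX : u ∈ X ∧ v ∈ X := by
      rw [Sym2.eq_iff] at he
      rcases he with ⟨h1, h2⟩ | ⟨h1, h2⟩
      · exact ⟨by rw [h1]; exact hu'X, by rw [h2]; exact hv'X⟩
      · exact ⟨by rw [h1]; exact hv'X, by rw [h2]; exact hu'X⟩
    have huC : u ∉ C := fun hc => (hCX u hc) huX.1
    have hvC : v ∉ C := fun hc => (hCX v hc) huX.2
    rw [hc'eq u huC, hc'eq v hvC]
    exact hc2 u v (halive u hu huC) (halive v hv hvC) hM'

end AuxKey
section AuxComp

variable {G : SimpleGraph V}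

lemma grestrict_walk_strengthen {T T' : Set V} {u v : V} (W : (grestrict G T).Walk u v)
    (h : ∀ z ∈ W.support, z ∈ T') : (grestrict G T').Reachable u v := by
  induction W with
  | nil => exact SimpleGraph.Reachable.refl _
  | @cons a b' d hadj W ih =>
    have ha : a ∈ T' := h a (by simp)
    have hb' : b' ∈ T' := h b' (by simp [SimpleGraph.Walk.support_cons])
    refine SimpleGraph.Reachable.trans ?_ (ih ?_)
    · exact SimpleGraph.Adj.reachable (grestrict_adj.mpr ⟨(grestrict_adj.mp hadj).1, ha, hb'⟩)
    · intro z hz; exact h z (by simp [SimpleGraph.Walk.support_cons]; tauto)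

lemma grestrict_walk_reach_support {T : Set V} {u v : V} (W : (grestrict G T).Walk u v) :
    ∀ z ∈ W.support, (grestrict G T).Reachable u z := by
  induction W with
  | nil => intro z hz; simp at hz; exact hz ▸ SimpleGraph.Reachable.refl _
  | @cons a b' d hadj W ih =>
    intro z hz
    rw [SimpleGraph.Walk.support_cons] at hz
    rcases List.mem_cons.mp hz with h1 | h1
    · exact h1 ▸ SimpleGraph.Reachable.refl _
    · exact SimpleGraph.Reachable.trans (SimpleGraph.Adj.reachable hadj) (ih z h1)

lemma comp_cover (G : SimpleGraph V) (A0 : Set V) {v : V} (hv : v ∈ A0) :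
    ∃ C, IsCompOf G A0 C ∧ v ∈ C := by
  classical
  set C : Set V := {u | u ∈ A0 ∧ (grestrict G A0).Reachable v u} with hC
  have hvC : v ∈ C := ⟨hv, SimpleGraph.Reachable.refl _⟩
  refine ⟨C, ⟨fun u hu => hu.1, ⟨v, hvC⟩, ?_, ?_⟩, hvC⟩
  · intro u hu u' hu'
    obtain ⟨W⟩ := (hu.2.symm.trans hu'.2)
    -- strengthen: all support vertices are in C
    refine grestrict_walk_strengthen W ?_
    intro z hz
    have h1 := grestrict_walk_support W z hz
    have h2 := grestrict_walk_reach_support W z hz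
    rcases h1 with h1 | h1
    · exact h1 ▸ hu
    · exact ⟨h1, hu.2.trans h2⟩
  · intro u hu w hw hadj
    exact ⟨hw, hu.2.trans (SimpleGraph.Adj.reachable (grestrict_adj.mpr ⟨hadj, hu.1, hw⟩))⟩

lemma comp_subset_of_mem {A0 C1 C2 : Set V} (h1 : IsCompOf G A0 C1) (h2 : IsCompOf G A0 C2)
    {u : V} (hu1 : u ∈ C1) (hu2 : u ∈ C2) : C1 ⊆ C2 := by
  intro u' hu'
  obtain ⟨W⟩ := h1.2.2.1 u hu1 u' hu'
  have aux : ∀ {p q : V} (W : (grestrict G C1).Walk p q), p ∈ C2 → ∀ z ∈ W.support, z ∈ C2 := by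
    intro p q W
    induction W with
    | nil => intro hp z hz; simp at hz; exact hz ▸ hp
    | @cons a b' d hadj W ih =>
      intro hp z hz
      have hb'C2 : b' ∈ C2 :=
        h2.2.2.2 a hp b' (h1.1 (grestrict_adj.mp hadj).2.2) (grestrict_adj.mp hadj).1
      rw [SimpleGraph.Walk.support_cons] at hz
      rcases List.mem_cons.mp hz with hz1 | hz1
      · exact hz1 ▸ hp
      · exact ih hb'C2 z hz1
  exact aux W hu2 u' (SimpleGraph.Walk.end_mem_support W)

lemma comp_eq_of_inter {A0 C1 C2 : Set V} (h1 : IsCompOf G A0 C1) (h2 : IsCompOf G A0 C2)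
    (hne : (C1 ∩ C2).Nonempty) : C1 = C2 := by
  obtain ⟨u, hu1, hu2⟩ := hne
  exact Set.Subset.antisymm (comp_subset_of_mem h1 h2 hu1 hu2) (comp_subset_of_mem h2 h1 hu2 hu1)

end AuxComp
section AuxSum

/-- auxiliary sum graph: `G` restricted to `A` on the left, isolated dummies right. -/
def sumGraph (G : SimpleGraph V) (A : Set V) (δ : ℕ) : SimpleGraph (V ⊕ Fin δ) where
  Adj z w := match z, w with
    | .inl u, .inl v => G.Adj u v ∧ u ∈ A ∧ v ∈ A
    | _, _ => False
  symm := by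
    constructor
    rintro (u | i) (v | j) h
    · exact ⟨h.1.symm, h.2.2, h.2.1⟩
    · exact h.elim
    · exact h.elim
    · exact h.elim
  loopless := by
    constructor
    rintro (u | i) h
    · exact G.irrefl h.1
    · exact h.elim

def sumLabels {L : Type} {δ : ℕ} (fL : V → Set L) : V ⊕ Fin δ → Set L :=
  fun z => match z with | .inl v => fL v | .inr _ => ∅

lemma sumGraph_adj_inl {G : SimpleGraph V} {A : Set V} {δ : ℕ} {u v : V} :
    (sumGraph G A δ).Adj (.inl u) (.inl v) ↔ G.Adj u v ∧ u ∈ A ∧ v ∈ A := Iff.rfl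

lemma sumGraph_not_adj_inr {G : SimpleGraph V} {A : Set V} {δ : ℕ} {i : Fin δ}
    {z : V ⊕ Fin δ} : ¬ (sumGraph G A δ).Adj (.inr i) z := by
  cases z <;> exact fun h => h

lemma reach_of_pullback {α β : Type} {P : SimpleGraph α} {Q : SimpleGraph β} (e : α ≃ β)
    (h : ∀ a b, Q.Adj (e a) (e b) ↔ P.Adj a b) {a b : α} :
    Q.Reachable (e a) (e b) ↔ P.Reachable a b := by
  constructor
  · intro hr
    have hr2 := SimpleGraph.Reachable.map
      (⟨e.symm, fun {x y} hxy => by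
        have h2 := h (e.symm x) (e.symm y)
        rw [e.apply_symm_apply, e.apply_symm_apply] at h2
        exact h2.mp hxy⟩ : Q →g P) hr
    have hre : ∀ x, (⟨⇑e.symm, fun {x y} hxy => by
        have h2 := h (e.symm x) (e.symm y)
        rw [e.apply_symm_apply, e.apply_symm_apply] at h2
        exact h2.mp hxy⟩ : Q →g P) x = e.symm x := fun x => rfl
    rw [hre, hre, e.symm_apply_apply, e.symm_apply_apply] at hr2
    exact hr2
  · intro hr
    exact SimpleGraph.Reachable.map ⟨e, fun hab => (h _ _).mpr hab⟩ hr

lemma greach_equiv {α β : Type} (e : α ≃ β) (P : SimpleGraph α) (Q : SimpleGraph β)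
    (hQ : ∀ a b, Q.Adj (e a) (e b) ↔ P.Adj a b) (S : Set α) (t : α) :
    greach Q {e t} (e '' S) = e '' greach P {t} S := by
  have hdel : ∀ a b, (gdelete Q (e '' S)).Adj (e a) (e b) ↔ (gdelete P S).Adj a b := by
    intro a b
    rw [gdelete_adj, gdelete_adj, hQ]
    simp [e.injective.mem_set_image]
  ext w
  constructor
  · rintro ⟨hw, x, ⟨hx1, hx2⟩, hr⟩
    rw [Set.mem_singleton_iff] at hx1
    subst hx1
    refine ⟨e.symm w, ⟨?_, t, ⟨rfl, ?_⟩, ?_⟩, by simp⟩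
    · intro hc; exact hw ⟨e.symm w, hc, by simp⟩
    · intro hc; exact hx2 ⟨t, hc, rfl⟩
    · have hr2 := hr
      rw [show w = e (e.symm w) by simp] at hr2
      exact (reach_of_pullback e hdel).mp hr2
  · rintro ⟨z, ⟨hz, x, ⟨hx1, hx2⟩, hr⟩, rfl⟩
    rw [Set.mem_singleton_iff] at hx1
    subst hx1
    refine ⟨?_, e x, ⟨rfl, ?_⟩, ?_⟩
    · rintro ⟨z', hz', hez⟩
      have : z' = z := e.injective hez
      exact hz (this ▸ hz')
    · rintro ⟨z', hz', hez⟩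
      have : z' = x := e.injective hez
      exact hx2 (this ▸ hz')
    · exact (reach_of_pullback e hdel).mpr hr

lemma reachLabels_equiv {α β L : Type} (e : α ≃ β) (P : SimpleGraph α) (Q : SimpleGraph β)
    (hQ : ∀ a b, Q.Adj (e a) (e b) ↔ P.Adj a b) (fP : α → Set L) (S : Set α) (t : α) :
    reachLabels Q (fP ∘ e.symm) (e '' S) (e t) = reachLabels P fP S t := by
  rw [reachLabels, reachLabels, greach_equiv e P Q hQ]
  ext l
  simp only [Set.mem_iUnion]
  constructor
  · rintro ⟨w, ⟨z, hz, rfl⟩, hl⟩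
    exact ⟨z, hz, by simpa using hl⟩
  · rintro ⟨z, hz, hl⟩
    exact ⟨e z, ⟨z, hz, rfl⟩, by simpa using hl⟩

lemma sum_reach_inl {G : SimpleGraph V} {A : Set V} {δ : ℕ} {S0 : Set V} {u : V}
    {z : V ⊕ Fin δ} (h : (gdelete (sumGraph G A δ) (Sum.inl '' S0)).Reachable (.inl u) z) :
    ∃ v : V, z = .inl v ∧ (grestrict G (A \ S0)).Reachable u v := by
  obtain ⟨W⟩ := h
  have aux : ∀ {z1 z2 : V ⊕ Fin δ}
      (W : (gdelete (sumGraph G A δ) (Sum.inl '' S0)).Walk z1 z2) (u1 : V),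
      z1 = .inl u1 → ∃ u2, z2 = .inl u2 ∧ (grestrict G (A \ S0)).Reachable u1 u2 := by
    intro z1 z2 W
    induction W with
    | nil => intro u1 h1; exact ⟨u1, h1, SimpleGraph.Reachable.refl _⟩
    | @cons a bz dz hadj W ih =>
      intro u1 h1
      subst h1
      rcases bz with w | j
      · obtain ⟨u2, h2, hr⟩ := ih w rfl
        refine ⟨u2, h2, SimpleGraph.Reachable.trans ?_ hr⟩
        obtain ⟨hadj1, hnm1, hnm2⟩ := hadj
        refine SimpleGraph.Adj.reachable (grestrict_adj.mpr ⟨hadj1.1, ⟨hadj1.2.1, ?_⟩, ⟨hadj1.2.2, ?_⟩⟩)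
        · intro hc; exact hnm1 ⟨u1, hc, rfl⟩
        · intro hc; exact hnm2 ⟨w, hc, rfl⟩
      · exact absurd hadj.1 (fun hc => hc)
  exact aux W u rfl

lemma sum_reach_inl' {G : SimpleGraph V} {A : Set V} {δ : ℕ} {S0 : Set V} {u v : V}
    (hu : u ∉ S0) (hv : v ∉ S0)
    (h : (grestrict G (A \ S0)).Reachable u v) :
    (gdelete (sumGraph G A δ) (Sum.inl '' S0)).Reachable (.inl u) (.inl v) := by
  obtain ⟨W⟩ := h
  have aux : ∀ {u1 u2 : V} (W : (grestrict G (A \ S0)).Walk u1 u2),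
      (gdelete (sumGraph G A δ) (Sum.inl '' S0)).Reachable (.inl u1) (.inl u2) := by
    intro u1 u2 W
    induction W with
    | nil => exact SimpleGraph.Reachable.refl _
    | @cons a b' d hadj W ih =>
      refine SimpleGraph.Reachable.trans (SimpleGraph.Adj.reachable ?_) ih
      obtain ⟨h1, ⟨h2a, h2b⟩, ⟨h3a, h3b⟩⟩ := grestrict_adj.mp hadj
      refine ⟨sumGraph_adj_inl.mpr ⟨h1, h2a, h3a⟩, ?_, ?_⟩
      · rintro ⟨w', hw', hww⟩
        rw [Sum.inl.injEq] at hww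
        exact h2b (hww ▸ hw')
      · rintro ⟨w', hw', hww⟩
        rw [Sum.inl.injEq] at hww
        exact h3b (hww ▸ hw')
  exact aux W

/-- spec of reachLabels on the sum graph, left terminal -/
lemma reachLabels_sum {L : Type} {G : SimpleGraph V} {A : Set V} {δ : ℕ} (fL : V → Set L)
    (S0 : Set V) (h : V) :
    reachLabels (sumGraph G A δ) (sumLabels fL) (Sum.inl '' S0) (.inl h) =
      {l | h ∉ S0 ∧ ∃ v, (grestrict G (A \ S0)).Reachable h v ∧ v ∉ S0 ∧ l ∈ fL v} := by
  ext l
  rw [reachLabels]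
  simp only [Set.mem_iUnion]
  constructor
  · rintro ⟨w, ⟨hw, x, ⟨hx1, hx2⟩, hr⟩, hl⟩
    rw [Set.mem_singleton_iff] at hx1
    subst hx1
    obtain ⟨v, rfl, hrv⟩ := sum_reach_inl hr
    refine ⟨fun hc => hx2 ⟨h, hc, rfl⟩, v, hrv, fun hc => hw ⟨v, hc, rfl⟩, hl⟩
  · rintro ⟨hh, v, hr, hv, hl⟩
    refine ⟨.inl v, ⟨?_, .inl h, ⟨rfl, ?_⟩, ?_⟩, hl⟩
    · rintro ⟨w', hw', hww⟩; rw [Sum.inl.injEq] at hww; exact hv (hww ▸ hw')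
    · rintro ⟨w', hw', hww⟩; rw [Sum.inl.injEq] at hww; exact hh (hww ▸ hw')
    · exact sum_reach_inl' hh hv hr

end AuxSum
section AuxChar

lemma ncard_biUnion_le {ι₂ : Type} [Fintype V] (I : Set ι₂) (hI : I.Finite)
    (f : ι₂ → Set V) (m : ℕ) (hf : ∀ i ∈ I, (f i).ncard ≤ m) :
    (⋃ i ∈ I, f i).ncard ≤ I.ncard * m := by
  revert hf
  refine Set.Finite.induction_on
    (motive := fun s _ => (∀ i ∈ s, (f i).ncard ≤ m) → (⋃ i ∈ s, f i).ncard ≤ s.ncard * m)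
    I hI ?_ ?_
  · intro _; simp
  · intro a s ha hs ih hf
    rw [Set.biUnion_insert]
    refine le_trans (Set.ncard_union_le _ _) ?_
    rw [Set.ncard_insert_of_notMem ha hs, Nat.add_mul, Nat.one_mul]
    have h1 := hf a (Set.mem_insert a s)
    have h2 := ih (fun i hi => hf i (Set.mem_insert_of_mem a hi))
    omega

open Classical in
lemma charBound [Fintype V] (G : SimpleGraph V) (X : Set V) (δ : ℕ)
    (C B : Set V) (hBδ : B.ncard ≤ δ) :
    ∃ W : Set V, W.ncard ≤ kappa δ (δ - 1) (X.ncard + δ) * (δ - 1) ∧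
      ∀ S : Set V, (S ∩ (C ∪ B)).ncard ≤ δ - 1 →
        ∃ R, R ⊆ C ∪ B ∧ R ⊆ W ∧ R.ncard ≤ (S ∩ (C ∪ B)).ncard ∧
          (∀ h ∈ B, h ∉ R → h ∉ S) ∧
          (∀ h ∈ B, h ∉ R → ∀ x ∈ X, ∀ v ∈ C, v ∉ R → G.Adj x v → ARch G (C ∪ B) R h v →
            ∃ v' ∈ C, v' ∉ S ∧ G.Adj x v' ∧ ARch G (C ∪ B) S h v') ∧
          (∀ h ∈ B, h ∉ R → ∀ h' ∈ B, h' ∉ R → ARch G (C ∪ B) R h h' →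
            ARch G (C ∪ B) S h h') := by
  classical
  set A : Set V := C ∪ B with hA
  set r : ℕ := X.ncard + δ with hr
  -- label injections
  set eX : ↥X ≃ Fin (X.ncard) :=
    (Finite.equivFin ↥X).trans (finCongr (Nat.card_coe_set_eq X)) with heX
  set eB : ↥B ≃ Fin (B.ncard) :=
    (Finite.equivFin ↥B).trans (finCongr (Nat.card_coe_set_eq B)) with heB
  set ι : ↥X → Fin r := fun x => Fin.castAdd δ (eX x) with hι
  set τ : ↥B → Fin δ := fun p => Fin.castLE hBδ (eB p) with hτ
  set ι' : Fin δ → Fin r := fun i => Fin.natAdd X.ncard i with hι'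
  have hιinj : Function.Injective ι := by
    intro x y hxy
    apply eX.injective
    have := congrArg Fin.val hxy
    simp only [hι, Fin.coe_castAdd] at this
    exact Fin.ext this
  have hτinj : Function.Injective τ := by
    intro x y hxy
    apply eB.injective
    have := congrArg Fin.val hxy
    simp only [hτ, Fin.coe_castLE] at this
    exact Fin.ext this
  have hι'inj : Function.Injective ι' := by
    intro i j hij
    have := congrArg Fin.val hij
    simp only [hι', Fin.coe_natAdd] at this
    exact Fin.ext (by omega)
  have hιι' : ∀ x i, ι x ≠ ι' i := by
    intro x i hc
    have h1 := congrArg Fin.val hc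
    simp only [hι, hι', Fin.coe_castAdd, Fin.coe_natAdd] at h1
    have h2 := (eX x).isLt
    omega
  -- labels
  set fL : V → Set (Fin r) := fun v =>
    {l | (v ∈ C ∧ ∃ x : ↥X, G.Adj x.1 v ∧ l = ι x) ∨ (∃ hb : v ∈ B, l = ι' (τ ⟨v, hb⟩))}
    with hfL
  -- terminals
  set TT : Fin δ → V ⊕ Fin δ :=
    fun i => if h : ∃ p : ↥B, τ p = i then .inl (h.choose.1) else .inr i with hTT
  have hTTB : ∀ p : ↥B, TT (τ p) = .inl p.1 := by
    intro p
    have hex : ∃ q : ↥B, τ q = τ p := ⟨p, rfl⟩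
    show (if h : ∃ q : ↥B, τ q = τ p then (Sum.inl h.choose.1 : V ⊕ Fin δ) else .inr (τ p))
        = .inl p.1
    rw [dif_pos hex]
    exact congrArg Sum.inl (congrArg Subtype.val (hτinj hex.choose_spec))
  have hTTval : ∀ i, TT i =
      if h : ∃ p : ↥B, τ p = i then .inl (h.choose.1) else .inr i := fun i => rfl
  have hTTinj : Function.Injective TT := by
    intro i j hij
    rw [hTTval, hTTval] at hij
    by_cases hi : ∃ p : ↥B, τ p = i <;> by_cases hj : ∃ p : ↥B, τ p = j
    · rw [dif_pos hi, dif_pos hj, Sum.inl.injEq] at hij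
      have heq : hi.choose = hj.choose := Subtype.ext hij
      rw [← hi.choose_spec, ← hj.choose_spec, heq]
    · rw [dif_pos hi, dif_neg hj] at hij; exact absurd hij (by simp)
    · rw [dif_neg hi, dif_pos hj] at hij; exact absurd hij (by simp)
    · rw [dif_neg hi, dif_neg hj, Sum.inr.injEq] at hij; exact hij
  -- finite model
  set N : ℕ := Fintype.card (V ⊕ Fin δ) with hN
  set e : (V ⊕ Fin δ) ≃ Fin N := Fintype.equivFin _ with he
  set GS : SimpleGraph (V ⊕ Fin δ) := sumGraph G A δ with hGS
  set G' : SimpleGraph (Fin N) :=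
    ⟨fun a b' => GS.Adj (e.symm a) (e.symm b'),
     ⟨fun a b' h => GS.adj_symm h⟩, ⟨fun a h => GS.irrefl h⟩⟩ with hG'
  have hQ : ∀ a b', G'.Adj (e a) (e b') ↔ GS.Adj a b' := by
    intro a b'
    show GS.Adj (e.symm (e a)) (e.symm (e b')) ↔ _
    rw [Equiv.symm_apply_apply, Equiv.symm_apply_apply]
  set f' : Fin N → Set (Fin r) := (sumLabels (δ := δ) fL) ∘ e.symm with hf'
  set T' : Fin δ → Fin N := fun i => e (TT i) with hT'
  have hT'inj : Function.Injective T' := fun i j hij => hTTinj (e.injective hij)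
  -- characteristics
  set chr : Set V → (Fin δ → Set (Fin r)) :=
    fun S0 => fun i => reachLabels G' f' (e '' (Sum.inl '' S0)) (T' i) with hchr
  have hchr_eq : ∀ (S0 : Set V) (i : Fin δ),
      chr S0 i = reachLabels GS (sumLabels fL) (Sum.inl '' S0) (TT i) := by
    intro S0 i
    show reachLabels G' f' (e '' (Sum.inl '' S0)) (e (TT i)) = _
    exact reachLabels_equiv e GS G' hQ (sumLabels fL) (Sum.inl '' S0) (TT i)
  have hspec : ∀ (S0 : Set V) (p : ↥B) (l : Fin r),
      l ∈ chr S0 (τ p) ↔ (p.1 ∉ S0 ∧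
        ∃ v, (grestrict G (A \ S0)).Reachable p.1 v ∧ v ∉ S0 ∧ l ∈ fL v) := by
    intro S0 p l
    rw [hchr_eq, hTTB, reachLabels_sum]
    exact Iff.rfl
  -- family of characteristics and minimal representatives
  set chrSet : Set (Fin δ → Set (Fin r)) :=
    {k | ∃ S0, S0 ⊆ A ∧ S0.ncard ≤ δ - 1 ∧ chr S0 = k} with hchrSet
  have hsub : chrSet ⊆ cutChars G' f' T' (δ - 1) := by
    rintro k ⟨S0, hS0A, hS0c, rfl⟩
    refine ⟨e '' (Sum.inl '' S0), ?_, rfl⟩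
    rw [Set.ncard_image_of_injective _ e.injective,
      Set.ncard_image_of_injective _ Sum.inl_injective]
    exact hS0c
  have hkap : chrSet.ncard ≤ kappa δ (δ - 1) r := by
    refine le_trans (Set.ncard_le_ncard hsub (Set.toFinite _)) ?_
    refine le_csSup ⟨Nat.card (Fin δ → Set (Fin r)), ?_⟩ ⟨N, G', f', T', hT'inj, rfl⟩
    rintro k ⟨N2, G2, f2, T2, hT2, rfl⟩
    calc (cutChars G2 f2 T2 (δ - 1)).ncard
        ≤ (Set.univ : Set (Fin δ → Set (Fin r))).ncard :=
          Set.ncard_le_ncard (Set.subset_univ _) (Set.toFinite _)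
      _ = Nat.card (Fin δ → Set (Fin r)) := Set.ncard_univ _
  have hrepex : ∀ k ∈ chrSet, ∃ S0, (S0 ⊆ A ∧ S0.ncard ≤ δ - 1 ∧ chr S0 = k) ∧
      ∀ S1, S1 ⊆ A → S1.ncard ≤ δ - 1 → chr S1 = k → S0.ncard ≤ S1.ncard := by
    intro k hk
    set P : ℕ → Prop :=
      fun n => ∃ S0, (S0 ⊆ A ∧ S0.ncard ≤ δ - 1 ∧ chr S0 = k) ∧ S0.ncard = n with hP
    obtain ⟨S0, h1⟩ := hk
    have hPex : ∃ n, P n := ⟨S0.ncard, S0, h1, rfl⟩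
    obtain ⟨S1, hS1, hS1n⟩ := Nat.find_spec hPex
    refine ⟨S1, hS1, ?_⟩
    intro S2 h2a h2b h2c
    rw [hS1n]
    exact Nat.find_le ⟨S2, ⟨h2a, h2b, h2c⟩, rfl⟩
  choose rep hrep1 hrep2 using hrepex
  set rep' : (Fin δ → Set (Fin r)) → Set V :=
    fun k => if h : k ∈ chrSet then rep k h else ∅ with hrep'
  set W : Set V := ⋃ k ∈ chrSet, rep' k with hWdef
  have hWcard : W.ncard ≤ kappa δ (δ - 1) r * (δ - 1) := by
    refine le_trans (ncard_biUnion_le chrSet (Set.toFinite _) rep' (δ - 1) ?_) ?_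
    · intro k hk
      have : rep' k = rep k hk := dif_pos hk
      rw [this]
      exact (hrep1 k hk).2.1
    · exact Nat.mul_le_mul_right _ hkap
  refine ⟨W, hWcard, ?_⟩
  intro S hS
  set S0 : Set V := S ∩ A with hS0def
  have hkmem : chr S0 ∈ chrSet := ⟨S0, Set.inter_subset_right, hS, rfl⟩
  set R : Set V := rep (chr S0) hkmem with hRdef
  obtain ⟨hRA, hRc, hchrR⟩ := hrep1 (chr S0) hkmem
  have hRmin : R.ncard ≤ S0.ncard :=
    hrep2 (chr S0) hkmem S0 Set.inter_subset_right hS rfl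
  have hAS : A \ S0 = A \ S := by
    rw [hS0def]; ext z; simp only [Set.mem_diff, Set.mem_inter_iff]; tauto
  have hRW : R ⊆ W := by
    intro z hz
    refine Set.mem_biUnion hkmem ?_
    have h1 : rep' (chr S0) = R := dif_pos hkmem
    rw [h1]; exact hz
  refine ⟨R, hRA, hRW, hRmin, ?_, ?_, ?_⟩
  · -- hBal
    intro h hhB hhR
    have htag : ι' (τ ⟨h, hhB⟩) ∈ chr R (τ ⟨h, hhB⟩) := by
      rw [hspec]
      exact ⟨hhR, h, SimpleGraph.Reachable.refl _, hhR, Or.inr ⟨hhB, rfl⟩⟩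
    rw [hchrR, hspec] at htag
    obtain ⟨hhS0, -⟩ := htag
    intro hhS
    exact hhS0 ⟨hhS, Or.inr hhB⟩
  · -- P1
    intro h hhB hhR x hxX v hvC hvR hadj hreach
    have hx : ι ⟨x, hxX⟩ ∈ chr R (τ ⟨h, hhB⟩) := by
      rw [hspec]
      exact ⟨hhR, v, hreach, hvR, Or.inl ⟨hvC, ⟨x, hxX⟩, hadj, rfl⟩⟩
    rw [hchrR, hspec] at hx
    obtain ⟨hhS0, v', hr', hv'S0, hfl⟩ := hx
    rcases hfl with ⟨hv'C, x0, hadj0, hlx⟩ | ⟨hv'B, hlx⟩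
    · have hx0 : x0 = ⟨x, hxX⟩ := hιinj hlx.symm
      refine ⟨v', hv'C, fun hc => hv'S0 ⟨hc, Or.inl hv'C⟩, ?_, ?_⟩
      · rw [← show x0.1 = x from congrArg Subtype.val hx0]
        exact hadj0
      · show (grestrict G (A \ S)).Reachable h v'
        rw [← hAS]
        exact hr'
    · exact absurd hlx (hιι' _ _)
  · -- P2
    intro h hhB hhR h' hh'B hh'R hreach
    have hx : ι' (τ ⟨h', hh'B⟩) ∈ chr R (τ ⟨h, hhB⟩) := by
      rw [hspec]
      exact ⟨hhR, h', hreach, hh'R, Or.inr ⟨hh'B, rfl⟩⟩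
    rw [hchrR, hspec] at hx
    obtain ⟨hhS0, v', hr', hv'S0, hfl⟩ := hx
    rcases hfl with ⟨-, x0, -, hlx⟩ | ⟨hv'B, hlx⟩
    · exact absurd hlx.symm (hιι' _ _)
    · have hveq : (⟨h', hh'B⟩ : ↥B) = ⟨v', hv'B⟩ := hτinj (hι'inj hlx)
      have hveq' : h' = v' := congrArg Subtype.val hveq
      show (grestrict G (A \ S)).Reachable h h'
      rw [← hAS, hveq']
      exact hr'

end AuxChar
section AuxFinal

lemma ncard_split [Fintype V] (S A : Set V) : (S \ A).ncard + (S ∩ A).ncard = S.ncard := by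
  have hdisj : Disjoint (S \ A) (S ∩ A) := by
    rw [Set.disjoint_left]
    rintro z ⟨hz1, hz2⟩ ⟨hz3, hz4⟩
    exact hz2 hz4
  have hun : (S \ A) ∪ (S ∩ A) = S := by
    ext z; simp only [Set.mem_union, Set.mem_diff, Set.mem_inter_iff]; tauto
  rw [← Set.ncard_union_eq hdisj (Set.toFinite _) (Set.toFinite _), hun]

end AuxFinal
/-- restricting the deletable vertices: for an annotated instance
`(G, X, M, ℓ)` and a set `H ⊆ V(G) \ X` meeting all important `X`-paths such that
`(G − X) − H` has at most `α` components each with at most `δ` neighbors in `H`, there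
is a set `Z ⊇ X ∪ H` with `|Z| ≤ |X| + |H| + α·δ·κ(δ, δ−1, |X|+δ)` such that the
instance has a solution iff it has a solution contained in `Z`. -/
theorem stmt6 [Fintype V] (G : SimpleGraph V) (X : Set V) (M : Set (Sym2 V)) (ℓ : ℕ)
    (hbip : (gdelete G X).Colorable 2) (hM : PairsOver M X)
    (H : Set V) (hH : H ⊆ Xᶜ) (α δ : ℕ)
    (hHit : ∀ (p q : V) (W : G.Walk p q), IsImpXPath G X M W →
      (H ∩ walkInterior W).Nonempty)
    (hα : {C : Set V | IsCompOf G (Xᶜ ∩ Hᶜ) C}.ncard ≤ α)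
    (hδ : ∀ C : Set V, IsCompOf G (Xᶜ ∩ Hᶜ) C → (gnbhd G C ∩ H).ncard ≤ δ) :
    ∃ Z : Set V, X ∪ H ⊆ Z ∧
      Z.ncard ≤ X.ncard + H.ncard + α * δ * kappa δ (δ - 1) (X.ncard + δ) ∧
      ((∃ S : Set V, S.ncard ≤ ℓ ∧ AnnColoring G M S) ↔
        (∃ S : Set V, S ⊆ Z ∧ S.ncard ≤ ℓ ∧ AnnColoring G M S)) := by
  classical
  set κ : ℕ := kappa δ (δ - 1) (X.ncard + δ) with hκ
  -- the bipartition of G − X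
  obtain ⟨col⟩ := hbip
  set b : V → Bool := fun v => if col v = 1 then true else false with hbdef
  have hb : ∀ u v, u ∉ X → v ∉ X → G.Adj u v → b u ≠ b v := by
    intro u v hu hv hadj
    have hcc : col u ≠ col v := col.valid ⟨hadj, hu, hv⟩
    show (if col u = 1 then true else false) ≠ (if col v = 1 then true else false)
    revert hcc
    have : ∀ a c : Fin 2, a ≠ c →
        (if a = 1 then true else false) ≠ (if c = 1 then true else false) := by decide
    exact this (col u) (col v)
  -- components
  set Comps : Set (Set V) := {C : Set V | IsCompOf G (Xᶜ ∩ Hᶜ) C} with hComps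
  have hCompsFin : Comps.Finite := Set.toFinite _
  -- per-component representative sets
  have hWex : ∀ C ∈ Comps, ∃ W : Set V, W.ncard ≤ κ * (δ - 1) ∧
      ∀ S : Set V, (S ∩ (C ∪ (gnbhd G C ∩ H))).ncard ≤ δ - 1 →
        ∃ R, R ⊆ C ∪ (gnbhd G C ∩ H) ∧ R ⊆ W ∧
          R.ncard ≤ (S ∩ (C ∪ (gnbhd G C ∩ H))).ncard ∧
          (∀ h ∈ (gnbhd G C ∩ H), h ∉ R → h ∉ S) ∧
          (∀ h ∈ (gnbhd G C ∩ H), h ∉ R → ∀ x ∈ X, ∀ v ∈ C, v ∉ R → G.Adj x v →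
            ARch G (C ∪ (gnbhd G C ∩ H)) R h v →
            ∃ v' ∈ C, v' ∉ S ∧ G.Adj x v' ∧ ARch G (C ∪ (gnbhd G C ∩ H)) S h v') ∧
          (∀ h ∈ (gnbhd G C ∩ H), h ∉ R → ∀ h' ∈ (gnbhd G C ∩ H), h' ∉ R →
            ARch G (C ∪ (gnbhd G C ∩ H)) R h h' → ARch G (C ∪ (gnbhd G C ∩ H)) S h h') :=
    fun C hC => charBound G X δ C (gnbhd G C ∩ H) (hδ C hC)
  choose Wc hWc1 hWc2 using hWex
  set WC : Set V → Set V := fun C => if h : C ∈ Comps then Wc C h else ∅ with hWC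
  set Z : Set V := (X ∪ H) ∪ ⋃ C ∈ Comps, WC C with hZ
  have hWCval : ∀ C (h : C ∈ Comps), WC C = Wc C h := fun C h => dif_pos h
  refine ⟨Z, Set.subset_union_left, ?_, ?_⟩
  · -- cardinality bound
    refine le_trans (Set.ncard_union_le _ _) ?_
    have h1 : (X ∪ H).ncard ≤ X.ncard + H.ncard := Set.ncard_union_le _ _
    have h2 : (⋃ C ∈ Comps, WC C).ncard ≤ Comps.ncard * (κ * (δ - 1)) := by
      refine ncard_biUnion_le Comps hCompsFin WC (κ * (δ - 1)) ?_
      intro C hC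
      rw [hWCval C hC]
      exact hWc1 C hC
    have h3 : Comps.ncard * (κ * (δ - 1)) ≤ α * δ * κ := by
      calc Comps.ncard * (κ * (δ - 1)) ≤ α * (κ * δ) :=
            Nat.mul_le_mul hα (Nat.mul_le_mul_left κ (Nat.sub_le δ 1))
        _ = α * δ * κ := by ring
    omega
  · constructor
    · rintro ⟨S, hSl, hSc⟩
      -- one component processing step
      have hstep : ∀ C ∈ Comps, ∀ S0 : Set V, S0.ncard ≤ ℓ → AnnColoring G M S0 →
          ∃ S', S'.ncard ≤ ℓ ∧ AnnColoring G M S' ∧ S' ∩ C ⊆ WC C ∧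
            ∀ z ∈ S', z ∈ S0 ∨ z ∈ C ∪ (gnbhd G C ∩ H) := by
        intro C hC S0 hS0l hS0c
        obtain ⟨c, hc1, hc2⟩ := hS0c
        set B : Set V := gnbhd G C ∩ H with hBdef
        have hsplit := ncard_split S0 (C ∪ B)
        by_cases hcase : δ ≤ (S0 ∩ (C ∪ B)).ncard
        · -- fallback: delete the whole boundary B
          have hkey := keyStep G X M hM H hH hHit b hb C hC B rfl S0 c hc1 hc2 B
            Set.subset_union_right
            (fun h hh hr => absurd hh hr)
            (fun h hh hr => absurd hh hr)
            (fun h hh hr => absurd hh hr)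
          refine ⟨(S0 \ (C ∪ B)) ∪ B, ?_, hkey, ?_, ?_⟩
          · refine le_trans (Set.ncard_union_le _ _) ?_
            have hBd : B.ncard ≤ δ := hδ C hC
            omega
          · rintro z ⟨hz1, hz2⟩
            exfalso
            rcases hz1 with ⟨-, hz3⟩ | hz3
            · exact hz3 (Or.inl hz2)
            · exact (hC.1 hz2).2 hz3.2
          · intro z hz
            rcases hz with ⟨hz1, -⟩ | hz1
            · exact Or.inl hz1
            · exact Or.inr (Or.inr hz1)
        · -- representative replacement
          push_neg at hcase
          have hcase' : (S0 ∩ (C ∪ B)).ncard ≤ δ - 1 := by omega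
          obtain ⟨R, hR1, hR2, hR3, hR4, hR5, hR6⟩ := hWc2 C hC S0 hcase'
          rw [← hBdef] at hR3
          have hkey := keyStep G X M hM H hH hHit b hb C hC B rfl S0 c hc1 hc2 R hR1
            hR4 (fun h hh hr x hx _ => hR5 h hh hr x hx) hR6
          refine ⟨(S0 \ (C ∪ B)) ∪ R, ?_, hkey, ?_, ?_⟩
          · refine le_trans (Set.ncard_union_le _ _) ?_
            omega
          · rintro z ⟨hz1, hz2⟩
            rcases hz1 with ⟨-, hz3⟩ | hz3
            · exact absurd (Or.inl hz2) hz3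
            · rw [hWCval C hC]
              exact hR2 hz3
          · intro z hz
            rcases hz with ⟨hz1, -⟩ | hz1
            · exact Or.inl hz1
            · exact Or.inr (hR1 hz1)
      -- process all components
      have hproc : ∀ (F : Finset (Set V)), ↑F ⊆ Comps →
          ∃ S', S'.ncard ≤ ℓ ∧ AnnColoring G M S' ∧ (∀ C ∈ F, S' ∩ C ⊆ WC C) := by
        intro F
        induction F using Finset.induction_on with
        | empty =>
          intro _
          exact ⟨S, hSl, hSc, by simp⟩
        | @insert a F' ha ih =>
          intro hsub
          have hsub' : ↑F' ⊆ Comps := by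
            refine Set.Subset.trans ?_ hsub
            intro z hz
            simp only [Finset.coe_insert, Set.mem_insert_iff]
            exact Or.inr hz
          obtain ⟨S1, h1', h2', h3'⟩ := ih hsub'
          have haC : a ∈ Comps := hsub (by simp)
          obtain ⟨S2, g1, g2, g3, g4⟩ := hstep a haC S1 h1' h2'
          refine ⟨S2, g1, g2, ?_⟩
          intro C hCF
          rcases Finset.mem_insert.mp hCF with rfl | hCF'
          · exact g3
          · rintro z ⟨hz1, hz2⟩
            rcases g4 z hz1 with hz3 | hz3
            · exact h3' C hCF' ⟨hz3, hz2⟩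
            · exfalso
              have hCcomp : C ∈ Comps := hsub' hCF'
              have hane : a ≠ C := by
                rintro rfl
                exact ha hCF'
              rcases hz3 with hz3 | hz3
              · exact hane (comp_eq_of_inter haC hCcomp ⟨z, hz3, hz2⟩)
              · exact (hCcomp.1 hz2).2 hz3.2
      obtain ⟨S', e1, e2, e3⟩ := hproc hCompsFin.toFinset
        (by rw [Set.Finite.coe_toFinset])
      refine ⟨S', ?_, e1, e2⟩
      intro z hz
      by_cases hzXH : z ∈ X ∪ H
      · exact Or.inl hzXH
      · have hz0 : z ∈ Xᶜ ∩ Hᶜ := by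
          rw [Set.mem_union] at hzXH
          push_neg at hzXH
          exact ⟨hzXH.1, hzXH.2⟩
        obtain ⟨C, hCcomp, hzC⟩ := comp_cover G (Xᶜ ∩ Hᶜ) hz0
        have hzW : z ∈ WC C := e3 C (by rw [Set.Finite.mem_toFinset]; exact hCcomp) ⟨hz, hzC⟩
        exact Or.inr (Set.mem_biUnion hCcomp hzW)
    · rintro ⟨S, -, hSl, hSc⟩
      exact ⟨S, hSl, hSc⟩
end AuxBasic
end

section
/- Let (G, L, f) be a labeled graph with a terminal vertex t ∈ V(G) and let S ⊆ V(G). Let J := L \ L(t, S) be the set of labels unreachable from t in G − S. Then there is an important (t, V_G(J))-separator S' such that |S'| ≤ |S| and L(t, S) = L(t, S'), i.e., S and S' separate exactly the same set of labels from t. -/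
set_option maxHeartbeats 1000000

variable {V : Type}

/-- `S` is an `(X,Y)`-separator: no vertex of `Y` is reachable from `X \ S` in `G − S`. -/
def IsSep (G : SimpleGraph V) (X Y S : Set V) : Prop := Y ∩ greach G X S = ∅

/-- A minimal `(X,Y)`-separator: none of its proper subsets is an `(X,Y)`-separator. -/
def IsMinSep (G : SimpleGraph V) (X Y S : Set V) : Prop :=
  IsSep G X Y S ∧ ∀ S' ⊂ S, ¬ IsSep G X Y S'

/-- `S'` dominates `S`: `|S'| ≤ |S|` and `R_G(X, S) ⊊ R_G(X, S')`. -/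
def SepDominates (G : SimpleGraph V) (X S' S : Set V) : Prop :=
  S'.ncard ≤ S.ncard ∧ greach G X S ⊂ greach G X S'

/-- An important `(X,Y)`-separator: minimal and dominated by no `(X,Y)`-separator. -/
def IsImpSep (G : SimpleGraph V) (X Y S : Set V) : Prop :=
  IsMinSep G X Y S ∧ ¬ ∃ S', IsSep G X Y S' ∧ SepDominates G X S' S

/-- `V_G(J)`: the vertices carrying at least one label from `J`. -/
def labelVerts {L : Type} (f : V → Set L) (J : Set L) : Set V := {v | (f v ∩ J).Nonempty}

/-- Deleting a larger set gives a smaller graph. -/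
lemma gdelete_mono {G : SimpleGraph V} {S S' : Set V} (h : S ⊆ S') :
    gdelete G S' ≤ gdelete G S := by
  intro u v hadj
  exact ⟨hadj.1, fun c => hadj.2.1 (h c), fun c => hadj.2.2 (h c)⟩

/-- Deleting a larger set gives a smaller reachable set. -/
lemma greach_anti {G : SimpleGraph V} {X S S' : Set V} (h : S ⊆ S') :
    greach G X S' ⊆ greach G X S := by
  rintro v ⟨hv, x, hx, hr⟩
  exact ⟨fun c => hv (h c), x, ⟨hx.1, fun c => hx.2 (h c)⟩,
    SimpleGraph.Reachable.mono (gdelete_mono h) hr⟩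

/-- equivalent important separator: for any terminal `t` and any
`S ⊆ V(G)`, letting `J = L \ L(t, S)` be the labels unreachable from `t` in `G − S`,
there is an important `({t}, V_G(J))`-separator `S'` with `|S'| ≤ |S|` and
`L(t, S) = L(t, S')`. -/
theorem stmt13 [Fintype V] {L : Type} [Fintype L] (G : SimpleGraph V)
    (f : V → Set L) (t : V) (S : Set V) :
    ∃ S' : Set V,
      IsImpSep G {t} (labelVerts f ((reachLabels G f S t)ᶜ)) S' ∧
      S'.ncard ≤ S.ncard ∧
      reachLabels G f S t = reachLabels G f S' t := by
  classical
  set Y := labelVerts f ((reachLabels G f S t)ᶜ) with hY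
  set N := Fintype.card V with hN
  -- any `(t,Y)`-separator keeps all reachable labels within `reachLabels G f S t`
  have key : ∀ T, IsSep G {t} Y T → reachLabels G f T t ⊆ reachLabels G f S t := by
    intro T hT l hl
    by_contra hnl
    rw [reachLabels, Set.mem_iUnion₂] at hl
    obtain ⟨v, hv, hlv⟩ := hl
    have hvY : v ∈ Y := ⟨l, hlv, hnl⟩
    have hmem : v ∈ Y ∩ greach G {t} T := ⟨hvY, hv⟩
    have h0 : Y ∩ greach G {t} T = ∅ := hT
    rw [h0] at hmem
    exact hmem
  have mono : ∀ T, greach G {t} S ⊆ greach G {t} T →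
      reachLabels G f S t ⊆ reachLabels G f T t := by
    intro T h l hl
    rw [reachLabels, Set.mem_iUnion₂] at hl ⊢
    obtain ⟨v, hv, hlv⟩ := hl
    exact ⟨v, h hv, hlv⟩
  -- `S` itself is a `(t, Y)`-separator
  have hsepS : IsSep G {t} Y S := by
    show Y ∩ greach G {t} S = ∅
    ext v
    simp only [Set.mem_inter_iff, Set.mem_empty_iff_false, iff_false, not_and]
    intro hvY hvR
    obtain ⟨l, hlv, hnl⟩ := hvY
    exact hnl (Set.mem_iUnion₂.2 ⟨v, hvR, hlv⟩)
  have hcard : ∀ T : Set V, T.ncard ≤ N := fun T => by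
    simpa [hN, Set.ncard_univ, Nat.card_eq_fintype_card] using
      Set.ncard_le_ncard (Set.subset_univ T) Set.finite_univ
  -- the candidate set and the score
  set sc : Set V → ℕ := fun T => (greach G {t} T).ncard * (N + 1) + (N - T.ncard) with hsc
  set C : Set (Set V) :=
    {T | IsSep G {t} Y T ∧ T.ncard ≤ S.ncard ∧ greach G {t} S ⊆ greach G {t} T} with hC
  set A : Set ℕ := sc '' C with hA
  have hSC : S ∈ C := by rw [hC]; exact ⟨hsepS, le_rfl, subset_rfl⟩
  have hAne : A.Nonempty := ⟨sc S, S, hSC, rfl⟩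
  have hbdd : BddAbove A := by
    refine ⟨N * (N + 1) + N, ?_⟩
    rintro n ⟨T, _, rfl⟩
    have h1 := hcard (greach G {t} T)
    have h3 : (greach G {t} T).ncard * (N + 1) ≤ N * (N + 1) :=
      Nat.mul_le_mul_right _ h1
    simp only [hsc]
    omega
  have hM := Nat.sSup_mem hAne hbdd
  rw [hA, Set.mem_image] at hM
  obtain ⟨T, hTC, hTsc⟩ := hM
  rw [hC] at hTC
  obtain ⟨hTsep, hTcard, hTsub⟩ := hTC
  have hmax : ∀ T' ∈ C, sc T' ≤ sc T := by
    intro T' hT'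
    rw [hTsc]
    exact le_csSup hbdd ⟨T', hT', rfl⟩
  refine ⟨T, ⟨⟨hTsep, ?_⟩, ?_⟩, hTcard, Set.Subset.antisymm (mono T hTsub) (key T hTsep)⟩
  · -- minimality
    intro S'' hsub hsep
    have hsubset : greach G {t} T ⊆ greach G {t} S'' := greach_anti hsub.subset
    have hg : (greach G {t} T).ncard ≤ (greach G {t} S'').ncard :=
      Set.ncard_le_ncard hsubset (Set.toFinite _)
    have hc : S''.ncard < T.ncard := Set.ncard_lt_ncard hsub (Set.toFinite _)
    have hmem : S'' ∈ C := by
      rw [hC]; exact ⟨hsep, hc.le.trans hTcard, hTsub.trans hsubset⟩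
    have hle := hmax S'' hmem
    have hmul : (greach G {t} T).ncard * (N + 1) ≤ (greach G {t} S'').ncard * (N + 1) :=
      Nat.mul_le_mul_right _ hg
    have hcT := hcard T
    simp only [hsc] at hle
    omega
  · -- importance
    rintro ⟨S'', hsep, hdom1, hdom2⟩
    have hg : (greach G {t} T).ncard < (greach G {t} S'').ncard :=
      Set.ncard_lt_ncard hdom2 (Set.toFinite _)
    have hmem : S'' ∈ C := by
      rw [hC]; exact ⟨hsep, hdom1.trans hTcard, hTsub.trans hdom2.subset⟩
    have hle := hmax S'' hmem
    have hmul : (greach G {t} T).ncard * (N + 1) + (N + 1) ≤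
        (greach G {t} S'').ncard * (N + 1) := by
      rw [← Nat.succ_mul]
      exact Nat.mul_le_mul_right _ hg
    have hcT := hcard T
    simp only [hsc] at hle
    omega
end
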